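/- arXiv:2002.08767 — 7 statements merged into one kernel-verified Lean document; each statement's English description precedes it below -/
import Mathlib

section
/- The complex function A = (a² − b²)/(a² + b²) + i·2ab/(a² + b²) satisfies the Poisson-bracket relation {A, H} = 2iλA at every point of U. -/
noncomputable section

open Complex

/-! Partial derivatives of complex-valued functions on phase space `(a, b, pa, pb)`. -/

def pda (f : ℝ → ℝ → ℝ → ℝ → ℂ) (a b pa pb : ℝ) : ℂ := deriv (fun t => f t b pa pb) a
def pdb (f : ℝ → ℝ → ℝ → ℝ → ℂ) (a b pa pb : ℝ) : ℂ := deriv (fun t => f a t pa pb) b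
def pdpa (f : ℝ → ℝ → ℝ → ℝ → ℂ) (a b pa pb : ℝ) : ℂ := deriv (fun t => f a b t pb) pa
def pdpb (f : ℝ → ℝ → ℝ → ℝ → ℂ) (a b pa pb : ℝ) : ℂ := deriv (fun t => f a b pa t) pb

/-- Poisson bracket of two complex-valued functions on phase space. -/
def PB (f g : ℝ → ℝ → ℝ → ℝ → ℂ) (a b pa pb : ℝ) : ℂ :=
  pda f a b pa pb * pdpa g a b pa pb + pdb f a b pa pb * pdpb g a b pa pb
    - pdpa f a b pa pb * pda g a b pa pb - pdpb f a b pa pb * pdb g a b pa pb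

/-! Partial derivatives of real-valued functions on phase space. -/

def pdaR (f : ℝ → ℝ → ℝ → ℝ → ℝ) (a b pa pb : ℝ) : ℝ := deriv (fun t => f t b pa pb) a
def pdbR (f : ℝ → ℝ → ℝ → ℝ → ℝ) (a b pa pb : ℝ) : ℝ := deriv (fun t => f a t pa pb) b
def pdpaR (f : ℝ → ℝ → ℝ → ℝ → ℝ) (a b pa pb : ℝ) : ℝ := deriv (fun t => f a b t pb) pa
def pdpbR (f : ℝ → ℝ → ℝ → ℝ → ℝ) (a b pa pb : ℝ) : ℝ := deriv (fun t => f a b pa t) pb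

/-- Poisson bracket of two real-valued functions on phase space. -/
def PBR (f g : ℝ → ℝ → ℝ → ℝ → ℝ) (a b pa pb : ℝ) : ℝ :=
  pdaR f a b pa pb * pdpaR g a b pa pb + pdbR f a b pa pb * pdpbR g a b pa pb
    - pdpaR f a b pa pb * pdaR g a b pa pb - pdpbR f a b pa pb * pdbR g a b pa pb

/-- The angular momentum `J = a p_b - b p_a`. -/
def Jang (a b pa pb : ℝ) : ℝ := a * pb - b * pa

/-- The Kepler-related Hamiltonian `H_{K2}` (real-valued). -/
def HR (k1 k2 k3 : ℝ) (a b pa pb : ℝ) : ℝ :=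
  (pa ^ 2 + pb ^ 2) / (2 * (a ^ 2 + b ^ 2)) + (k1 + k2 * a + k3 * b) / (a ^ 2 + b ^ 2)

/-- The Kepler-related Hamiltonian, viewed as a complex-valued function. -/
def HC (k1 k2 k3 : ℝ) (a b pa pb : ℝ) : ℂ := (HR k1 k2 k3 a b pa pb : ℂ)

/-- The function `lambda = J/(a^2+b^2)^2`. -/
def lam (a b pa pb : ℝ) : ℝ := Jang a b pa pb / (a ^ 2 + b ^ 2) ^ 2

def A1 (a b pa pb : ℝ) : ℝ := (a ^ 2 - b ^ 2) / (a ^ 2 + b ^ 2)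
def A2 (a b pa pb : ℝ) : ℝ := 2 * a * b / (a ^ 2 + b ^ 2)

/-- The complex function `A = A1 + i A2`. -/
def Afun (a b pa pb : ℝ) : ℂ := (A1 a b pa pb : ℂ) + Complex.I * (A2 a b pa pb : ℂ)

def B1 (k1 : ℝ) (a b pa pb : ℝ) : ℝ := (Jang a b pa pb) ^ 2 / (a ^ 2 + b ^ 2) + k1
def B2 (k2 k3 : ℝ) (a b pa pb : ℝ) : ℝ :=
  Jang a b pa pb * (a * pa + b * pb) / (a ^ 2 + b ^ 2) + k3 * a - k2 * b

/-- The complex function `B = B1 + i B2`. -/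
def Bfun (k1 k2 k3 : ℝ) (a b pa pb : ℝ) : ℂ :=
  (B1 k1 a b pa pb : ℂ) + Complex.I * (B2 k2 k3 a b pa pb : ℂ)

def Ma1 (k1 k2 k3 : ℝ) (a b pa pb : ℝ) : ℝ :=
  (Jang a b pa pb * pa - (k2 * b - k3 * a) * a) / Real.sqrt (a ^ 2 + b ^ 2)
def Ma2 (k1 k2 k3 : ℝ) (a b pa pb : ℝ) : ℝ :=
  (-(Jang a b pa pb) * pb - 2 * k1 * a + (k2 * b - k3 * a) * b) / Real.sqrt (a ^ 2 + b ^ 2)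

/-- The complex function `M_a = M_{a1} + i M_{a2}`. -/
def Mafun (k1 k2 k3 : ℝ) (a b pa pb : ℝ) : ℂ :=
  (Ma1 k1 k2 k3 a b pa pb : ℂ) + Complex.I * (Ma2 k1 k2 k3 a b pa pb : ℂ)

def Mb1 (k1 k2 k3 : ℝ) (a b pa pb : ℝ) : ℝ :=
  (Jang a b pa pb * pb - (k2 * b - k3 * a) * b) / Real.sqrt (a ^ 2 + b ^ 2)
def Mb2 (k1 k2 k3 : ℝ) (a b pa pb : ℝ) : ℝ :=
  (Jang a b pa pb * pa - 2 * k1 * b - (k2 * b - k3 * a) * a) / Real.sqrt (a ^ 2 + b ^ 2)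

/-- The complex function `M_b = M_{b1} + i M_{b2}`. -/
def Mbfun (k1 k2 k3 : ℝ) (a b pa pb : ℝ) : ℂ :=
  (Mb1 k1 k2 k3 a b pa pb : ℂ) + Complex.I * (Mb2 k1 k2 k3 a b pa pb : ℂ)

/-- Directional derivative of a complex-valued function along a (real) tangent vector `v ∈ ℝ⁴`,
with coordinates ordered `(a, b, p_a, p_b)`. -/
def dd (f : ℝ → ℝ → ℝ → ℝ → ℂ) (a b pa pb : ℝ) (v : Fin 4 → ℝ) : ℂ :=
  pda f a b pa pb * (v 0 : ℂ) + pdb f a b pa pb * (v 1 : ℂ)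
    + pdpa f a b pa pb * (v 2 : ℂ) + pdpb f a b pa pb * (v 3 : ℂ)

/-- Directional derivative of a real-valued function along a tangent vector `v ∈ ℝ⁴`. -/
def ddR (f : ℝ → ℝ → ℝ → ℝ → ℝ) (a b pa pb : ℝ) (v : Fin 4 → ℝ) : ℝ :=
  pdaR f a b pa pb * v 0 + pdbR f a b pa pb * v 1
    + pdpaR f a b pa pb * v 2 + pdpbR f a b pa pb * v 3

/-- The 2-form `dF ∧ dG` evaluated on a pair of tangent vectors. -/
def wedgeR (f g : ℝ → ℝ → ℝ → ℝ → ℝ) (a b pa pb : ℝ) (u v : Fin 4 → ℝ) : ℝ :=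
  ddR f a b pa pb u * ddR g a b pa pb v - ddR f a b pa pb v * ddR g a b pa pb u

/-- Hamiltonian vector field of a real-valued function:
`(∂f/∂p_a, ∂f/∂p_b, -∂f/∂a, -∂f/∂b)`. -/
def hamVF (f : ℝ → ℝ → ℝ → ℝ → ℝ) (a b pa pb : ℝ) : Fin 4 → ℝ :=
  ![pdpaR f a b pa pb, pdpbR f a b pa pb, -pdaR f a b pa pb, -pdbR f a b pa pb]

/-- Hamiltonian vector field of a complex-valued function. -/
def hamVFC (f : ℝ → ℝ → ℝ → ℝ → ℂ) (a b pa pb : ℝ) : Fin 4 → ℂ :=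
  ![pdpa f a b pa pb, pdpb f a b pa pb, -pda f a b pa pb, -pdb f a b pa pb]

/-- The Hamiltonian vector field `Γ` of `H_{K2}`. -/
def GammaVF (k1 k2 k3 : ℝ) (a b pa pb : ℝ) : Fin 4 → ℝ := hamVF (HR k1 k2 k3) a b pa pb

/-- The real first integral `J₃ = Re (A·B*)`. -/
def J3fun (k1 k2 k3 : ℝ) (a b pa pb : ℝ) : ℝ :=
  (Afun a b pa pb * (starRingEnd ℂ) (Bfun k1 k2 k3 a b pa pb)).re

/-- The real first integral `J₄ = Im (A·B*)`. -/
def J4fun (k1 k2 k3 : ℝ) (a b pa pb : ℝ) : ℝ :=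
  (Afun a b pa pb * (starRingEnd ℂ) (Bfun k1 k2 k3 a b pa pb)).im

/-- The explicit coordinate expression for `J₃`. -/
def J3ex (k1 k2 k3 : ℝ) (a b pa pb : ℝ) : ℝ :=
  Jang a b pa pb * (a * pb + b * pa) / (a ^ 2 + b ^ 2)
    + 2 * ((k1 / 2) * ((a ^ 2 - b ^ 2) / (a ^ 2 + b ^ 2))
        - k2 * (a * b ^ 2 / (a ^ 2 + b ^ 2)) + k3 * (a ^ 2 * b / (a ^ 2 + b ^ 2)))

/-- The explicit coordinate expression for `J₄`. -/
def J4ex (k1 k2 k3 : ℝ) (a b pa pb : ℝ) : ℝ :=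
  Jang a b pa pb * (a * pa - b * pb) / (a ^ 2 + b ^ 2)
    - 2 * (k1 * (a * b / (a ^ 2 + b ^ 2))
        + (k2 / 2) * (b * (a ^ 2 - b ^ 2) / (a ^ 2 + b ^ 2))
        + (k3 / 2) * (a * (b ^ 2 - a ^ 2) / (a ^ 2 + b ^ 2)))

/-- The real first integral `K₃ = Re (M_a·M_b*)`. -/
def K3fun (k1 k2 k3 : ℝ) (a b pa pb : ℝ) : ℝ :=
  (Mafun k1 k2 k3 a b pa pb * (starRingEnd ℂ) (Mbfun k1 k2 k3 a b pa pb)).re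

/-- The real first integral `K₄ = Im (M_a·M_b*)`. -/
def K4fun (k1 k2 k3 : ℝ) (a b pa pb : ℝ) : ℝ :=
  (Mafun k1 k2 k3 a b pa pb * (starRingEnd ℂ) (Mbfun k1 k2 k3 a b pa pb)).im

/-- The real 2-form `Ω₁ = dA₁ ∧ dB₁ + dA₂ ∧ dB₂`. -/
def Om1 (k1 k2 k3 : ℝ) (a b pa pb : ℝ) (u v : Fin 4 → ℝ) : ℝ :=
  wedgeR A1 (B1 k1) a b pa pb u v + wedgeR A2 (B2 k2 k3) a b pa pb u v

/-- The real 2-form `Ω₂ = -dA₁ ∧ dB₂ + dA₂ ∧ dB₁`. -/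
def Om2 (k1 k2 k3 : ℝ) (a b pa pb : ℝ) (u v : Fin 4 → ℝ) : ℝ :=
  -wedgeR A1 (B2 k2 k3) a b pa pb u v + wedgeR A2 (B1 k1) a b pa pb u v

/-- The real 2-form `Ω_{M1} = dM_{a1} ∧ dM_{b1} + dM_{a2} ∧ dM_{b2}`. -/
def OmM1 (k1 k2 k3 : ℝ) (a b pa pb : ℝ) (u v : Fin 4 → ℝ) : ℝ :=
  wedgeR (Ma1 k1 k2 k3) (Mb1 k1 k2 k3) a b pa pb u v
    + wedgeR (Ma2 k1 k2 k3) (Mb2 k1 k2 k3) a b pa pb u v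

/-- The real 2-form `Ω_{M2} = -dM_{a1} ∧ dM_{b2} + dM_{a2} ∧ dM_{b1}`. -/
def OmM2 (k1 k2 k3 : ℝ) (a b pa pb : ℝ) (u v : Fin 4 → ℝ) : ℝ :=
  -wedgeR (Ma1 k1 k2 k3) (Mb2 k1 k2 k3) a b pa pb u v
    + wedgeR (Ma2 k1 k2 k3) (Mb1 k1 k2 k3) a b pa pb u v

/-- The standard basis vectors of `ℝ⁴`. -/
def ebasis (j : Fin 4) : Fin 4 → ℝ := Pi.single j 1


/-- `{A, H} = 2 i λ A` on `U`. -/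
theorem stmt0 (k1 k2 k3 : ℝ) (a b pa pb : ℝ) (hU : a ^ 2 + b ^ 2 ≠ 0) :
    PB Afun (HC k1 k2 k3) a b pa pb =
      2 * Complex.I * (lam a b pa pb : ℂ) * Afun a b pa pb := by
  have hC : ((a:ℂ) ^ 2 + (b:ℂ) ^ 2) ≠ 0 := by
    have := Complex.ofReal_ne_zero.mpr hU
    push_cast at this
    exact this
  have h2a : HasDerivAt (fun t : ℝ => t ^ 2 + b ^ 2) (2 * a) a := by
    simpa using ((hasDerivAt_pow 2 a).add_const (b ^ 2))
  have h2b : HasDerivAt (fun t : ℝ => a ^ 2 + t ^ 2) (2 * b) b := by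
    simpa using ((hasDerivAt_pow 2 b).const_add (a ^ 2))
  -- ∂A/∂a
  have hA1a : HasDerivAt (fun t => A1 t b pa pb)
      ((2 * a * (a ^ 2 + b ^ 2) - (a ^ 2 - b ^ 2) * (2 * a)) / ((a ^ 2 + b ^ 2) ^ 2)) a := by
    have h1 : HasDerivAt (fun t : ℝ => t ^ 2 - b ^ 2) (2 * a) a := by
      simpa using ((hasDerivAt_pow 2 a).sub_const (b ^ 2))
    simpa [A1, Pi.div_def] using h1.div h2a hU
  have hA2a : HasDerivAt (fun t => A2 t b pa pb)
      ((2 * b * (a ^ 2 + b ^ 2) - 2 * a * b * (2 * a)) / ((a ^ 2 + b ^ 2) ^ 2)) a := by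
    have h1 : HasDerivAt (fun t : ℝ => 2 * t * b) (2 * b) a := by
      have := ((hasDerivAt_id a).const_mul 2).mul_const b
      simpa [mul_comm, mul_assoc] using this
    simpa [A2, Pi.div_def] using h1.div h2a hU
  -- ∂A/∂b
  have hA1b : HasDerivAt (fun t => A1 a t pa pb)
      ((-(2 * b) * (a ^ 2 + b ^ 2) - (a ^ 2 - b ^ 2) * (2 * b)) / ((a ^ 2 + b ^ 2) ^ 2)) b := by
    have h1 : HasDerivAt (fun t : ℝ => a ^ 2 - t ^ 2) (-(2 * b)) b := by
      simpa using ((hasDerivAt_pow 2 b).const_sub (a ^ 2))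
    simpa [A1, Pi.div_def] using h1.div h2b hU
  have hA2b : HasDerivAt (fun t => A2 a t pa pb)
      ((2 * a * (a ^ 2 + b ^ 2) - 2 * a * b * (2 * b)) / ((a ^ 2 + b ^ 2) ^ 2)) b := by
    have h1 : HasDerivAt (fun t : ℝ => 2 * a * t) (2 * a) b := by
      simpa using (hasDerivAt_id b).const_mul (2 * a)
    simpa [A2, Pi.div_def] using h1.div h2b hU
  -- ∂H/∂a
  have hnum_a : HasDerivAt (fun t : ℝ => k1 + k2 * t + k3 * b) k2 a := by
    have := (((hasDerivAt_id a).const_mul k2).const_add k1).add_const (k3 * b)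
    simpa using this
  have hHa : HasDerivAt (fun t => HR k1 k2 k3 t b pa pb)
      ((0 * (2 * (a ^ 2 + b ^ 2)) - (pa ^ 2 + pb ^ 2) * (2 * (2 * a))) / ((2 * (a ^ 2 + b ^ 2)) ^ 2)
        + (k2 * (a ^ 2 + b ^ 2) - (k1 + k2 * a + k3 * b) * (2 * a)) / ((a ^ 2 + b ^ 2) ^ 2)) a := by
    have hden : HasDerivAt (fun t : ℝ => 2 * (t ^ 2 + b ^ 2)) (2 * (2 * a)) a := h2a.const_mul 2
    have hdenne : 2 * (a ^ 2 + b ^ 2) ≠ 0 := by positivity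
    have h1 := (hasDerivAt_const a (pa ^ 2 + pb ^ 2)).div hden hdenne
    have h2 := hnum_a.div h2a hU
    simpa [HR, Pi.div_def, Pi.add_def] using h1.add h2
  -- ∂H/∂b
  have hnum_b : HasDerivAt (fun t : ℝ => k1 + k2 * a + k3 * t) k3 b := by
    have := ((hasDerivAt_id b).const_mul k3).const_add (k1 + k2 * a)
    simpa [add_assoc] using this
  have hHb : HasDerivAt (fun t => HR k1 k2 k3 a t pa pb)
      ((0 * (2 * (a ^ 2 + b ^ 2)) - (pa ^ 2 + pb ^ 2) * (2 * (2 * b))) / ((2 * (a ^ 2 + b ^ 2)) ^ 2)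
        + (k3 * (a ^ 2 + b ^ 2) - (k1 + k2 * a + k3 * b) * (2 * b)) / ((a ^ 2 + b ^ 2) ^ 2)) b := by
    have hden : HasDerivAt (fun t : ℝ => 2 * (a ^ 2 + t ^ 2)) (2 * (2 * b)) b := h2b.const_mul 2
    have hdenne : 2 * (a ^ 2 + b ^ 2) ≠ 0 := by positivity
    have h1 := (hasDerivAt_const b (pa ^ 2 + pb ^ 2)).div hden hdenne
    have h2 := hnum_b.div h2b hU
    simpa [HR, Pi.div_def, Pi.add_def] using h1.add h2
  -- ∂H/∂pa, ∂H/∂pb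
  have hHpa : HasDerivAt (fun t => HR k1 k2 k3 a b t pb)
      (2 * pa / (2 * (a ^ 2 + b ^ 2))) pa := by
    have h1 : HasDerivAt (fun t : ℝ => (t ^ 2 + pb ^ 2) / (2 * (a ^ 2 + b ^ 2)))
        (2 * pa / (2 * (a ^ 2 + b ^ 2))) pa := by
      have : HasDerivAt (fun t : ℝ => t ^ 2 + pb ^ 2) (2 * pa) pa := by
        simpa using ((hasDerivAt_pow 2 pa).add_const (pb ^ 2))
      exact this.div_const _
    simpa [HR] using h1.add_const ((k1 + k2 * a + k3 * b) / (a ^ 2 + b ^ 2))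
  have hHpb : HasDerivAt (fun t => HR k1 k2 k3 a b pa t)
      (2 * pb / (2 * (a ^ 2 + b ^ 2))) pb := by
    have h1 : HasDerivAt (fun t : ℝ => (pa ^ 2 + t ^ 2) / (2 * (a ^ 2 + b ^ 2)))
        (2 * pb / (2 * (a ^ 2 + b ^ 2))) pb := by
      have : HasDerivAt (fun t : ℝ => pa ^ 2 + t ^ 2) (2 * pb) pb := by
        simpa using ((hasDerivAt_pow 2 pb).const_add (pa ^ 2))
      exact this.div_const _
    simpa [HR] using h1.add_const ((k1 + k2 * a + k3 * b) / (a ^ 2 + b ^ 2))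
  -- assemble complex derivatives
  have hAa : pda Afun a b pa pb =
      (((2 * a * (a ^ 2 + b ^ 2) - (a ^ 2 - b ^ 2) * (2 * a)) / ((a ^ 2 + b ^ 2) ^ 2) : ℝ) : ℂ)
        + Complex.I * (((2 * b * (a ^ 2 + b ^ 2) - 2 * a * b * (2 * a)) / ((a ^ 2 + b ^ 2) ^ 2) : ℝ) : ℂ) := by
    have := (hA1a.ofReal_comp).add ((hA2a.ofReal_comp).const_mul Complex.I)
    exact this.deriv
  have hAb : pdb Afun a b pa pb =
      (((-(2 * b) * (a ^ 2 + b ^ 2) - (a ^ 2 - b ^ 2) * (2 * b)) / ((a ^ 2 + b ^ 2) ^ 2) : ℝ) : ℂ)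
        + Complex.I * (((2 * a * (a ^ 2 + b ^ 2) - 2 * a * b * (2 * b)) / ((a ^ 2 + b ^ 2) ^ 2) : ℝ) : ℂ) := by
    have := (hA1b.ofReal_comp).add ((hA2b.ofReal_comp).const_mul Complex.I)
    exact this.deriv
  have hApa : pdpa Afun a b pa pb = 0 := by
    simp [pdpa, Afun, A1, A2]
  have hApb : pdpb Afun a b pa pb = 0 := by
    simp [pdpb, Afun, A1, A2]
  have hHCa : pda (HC k1 k2 k3) a b pa pb =
      ((((0 * (2 * (a ^ 2 + b ^ 2)) - (pa ^ 2 + pb ^ 2) * (2 * (2 * a))) / ((2 * (a ^ 2 + b ^ 2)) ^ 2)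
        + (k2 * (a ^ 2 + b ^ 2) - (k1 + k2 * a + k3 * b) * (2 * a)) / ((a ^ 2 + b ^ 2) ^ 2)) : ℝ) : ℂ) :=
    (hHa.ofReal_comp).deriv
  have hHCb : pdb (HC k1 k2 k3) a b pa pb =
      ((((0 * (2 * (a ^ 2 + b ^ 2)) - (pa ^ 2 + pb ^ 2) * (2 * (2 * b))) / ((2 * (a ^ 2 + b ^ 2)) ^ 2)
        + (k3 * (a ^ 2 + b ^ 2) - (k1 + k2 * a + k3 * b) * (2 * b)) / ((a ^ 2 + b ^ 2) ^ 2)) : ℝ) : ℂ) :=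
    (hHb.ofReal_comp).deriv
  have hHCpa : pdpa (HC k1 k2 k3) a b pa pb = ((2 * pa / (2 * (a ^ 2 + b ^ 2)) : ℝ) : ℂ) :=
    (hHpa.ofReal_comp).deriv
  have hHCpb : pdpb (HC k1 k2 k3) a b pa pb = ((2 * pb / (2 * (a ^ 2 + b ^ 2)) : ℝ) : ℂ) :=
    (hHpb.ofReal_comp).deriv
  rw [PB, hAa, hAb, hApa, hApb, hHCa, hHCb, hHCpa, hHCpb]
  simp only [Afun, A1, A2, lam, Jang]
  push_cast
  field_simp
  ring_nf
  simp only [Complex.I_sq]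
  ring
end
end

section
/- The complex function B = B₁ + iB₂ with B₁ = J²/(a² + b²) + k₁ and B₂ = J(a p_a + b p_b)/(a² + b²) + k₃ a − k₂ b satisfies the Poisson-bracket relation {B, H} = 2iλB at every point of U. -/
noncomputable section

open Complex

lemma hdR (x : ℝ) : HasDerivAt (fun t : ℝ => (t : ℂ)) 1 x := by
  exact Complex.ofRealCLM.hasDerivAt (x := x)

lemma L1 (c3 c2 c1 c0 d e1 e0 : ℂ) (x : ℝ) (h : (x:ℂ)^2 + d ≠ 0) :
    HasDerivAt (fun t : ℝ =>
        (c3*(t:ℂ)^3 + c2*(t:ℂ)^2 + c1*(t:ℂ) + c0) / ((t:ℂ)^2 + d) + e1*(t:ℂ) + e0)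
      (((3*c3*(x:ℂ)^2 + 2*c2*(x:ℂ) + c1) * ((x:ℂ)^2 + d)
          - (c3*(x:ℂ)^3 + c2*(x:ℂ)^2 + c1*(x:ℂ) + c0) * (2*(x:ℂ))) / ((x:ℂ)^2 + d)^2
        + e1) x := by
  have hb : HasDerivAt (fun t : ℝ => (t:ℂ)) 1 x := hdR x
  have h3 : HasDerivAt (fun t : ℝ => c3*(t:ℂ)^3) (c3 * (3*(x:ℂ)^2)) x := by
    have := (hb.mul (hb.mul hb)).const_mul c3
    convert this using 1
    · rfl
    · funext t; simp only [Pi.mul_apply, Pi.add_apply, Pi.pow_apply]; ring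
    · simp only [Pi.mul_apply, Pi.add_apply, Pi.pow_apply]; ring
  have h2' : HasDerivAt (fun t : ℝ => c2*(t:ℂ)^2) (c2 * (2*(x:ℂ))) x := by
    have := (hb.mul hb).const_mul c2
    convert this using 1
    · rfl
    · funext t; simp only [Pi.mul_apply, Pi.add_apply, Pi.pow_apply]; ring
    · ring
  have h1' : HasDerivAt (fun t : ℝ => c1*(t:ℂ) + c0) c1 x := by
    simpa using (hb.const_mul c1).add_const c0
  have hn : HasDerivAt (fun t : ℝ => c3*(t:ℂ)^3 + c2*(t:ℂ)^2 + c1*(t:ℂ) + c0)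
      (3*c3*(x:ℂ)^2 + 2*c2*(x:ℂ) + c1) x := by
    have := (h3.add h2').add h1'
    convert this using 1
    · rfl
    · funext t; simp only [Pi.mul_apply, Pi.add_apply, Pi.pow_apply]; ring
    · ring
  have hq : HasDerivAt (fun t : ℝ => (t:ℂ)^2 + d) (2*(x:ℂ)) x := by
    have := (hb.mul hb).add_const d
    convert this using 1
    · rfl
    · funext t; simp only [Pi.mul_apply, Pi.add_apply, Pi.pow_apply]; ring
    · ring
  have he : HasDerivAt (fun t : ℝ => e1*(t:ℂ)) e1 x := by simpa using hb.const_mul e1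
  simpa using ((hn.div hq h).add he).add_const e0

lemma L2 (c2 c1 c0 : ℂ) (x : ℝ) :
    HasDerivAt (fun t : ℝ => c2*(t:ℂ)^2 + c1*(t:ℂ) + c0) (2*c2*(x:ℂ) + c1) x := by
  have hb := hdR x
  have h2' : HasDerivAt (fun t : ℝ => c2*(t:ℂ)^2) (c2 * (2*(x:ℂ))) x := by
    have := (hb.mul hb).const_mul c2
    convert this using 1
    · rfl
    · funext t; simp only [Pi.mul_apply, Pi.add_apply, Pi.pow_apply]; ring
    · ring
  have h1' : HasDerivAt (fun t : ℝ => c1*(t:ℂ) + c0) c1 x := by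
    simpa using (hb.const_mul c1).add_const c0
  have := h2'.add h1'
  convert this using 1
  · rfl
  · funext t; simp only [Pi.mul_apply, Pi.add_apply, Pi.pow_apply]; ring
  · ring

set_option maxHeartbeats 4000000 in
lemma final (A B P R K1 K2 K3 : ℂ) (hQ : A^2 + B^2 ≠ 0) :
    (((3*0*A^2 + 2*(R^2 + Complex.I*P*R)*A + (-2*B*P*R + Complex.I*(B*R^2 - B*P^2))) * (A^2 + (B^2)) - (0*A^3 + (R^2 + Complex.I*P*R)*A^2 + (-2*B*P*R + Complex.I*(B*R^2 - B*P^2))*A + (B^2*P^2 - Complex.I*B^2*P*R)) * (2*A)) / (A^2 + (B^2))^2 + (Complex.I*K3)) * (2*(1/(2*(A^2 + B^2)))*P + (0)) + (((3*0*B^2 + 2*(P^2 - Complex.I*P*R)*B + (-2*A*P*R + Complex.I*(A*R^2 - A*P^2))) * (A^2 + (B^2)) - (0*B^3 + (P^2 - Complex.I*P*R)*B^2 + (-2*A*P*R + Complex.I*(A*R^2 - A*P^2))*B + (A^2*R^2 + Complex.I*A^2*P*R)) * (2*B)) / (A^2 + (B^2))^2 + (-Complex.I*K2)) * (2*(1/(2*(A^2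 + B^2)))*R + (0)) - (2*((B^2 - Complex.I*A*B)/(A^2 + B^2))*P + ((-2*A*B*R + Complex.I*(A^2*R - B^2*R))/(A^2 + B^2))) * (((3*0*A^2 + 2*(0)*A + (K2)) * (A^2 + (B^2)) - (0*A^3 + (0)*A^2 + (K2)*A + ((P^2+R^2)/2 + K1 + K3*B)) * (2*A)) / (A^2 + (B^2))^2 + (0)) - (2*((A^2 + Complex.I*A*B)/(A^2 + B^2))*R + ((-2*A*B*P + Complex.I*(A^2*P - B^2*P))/(A^2 + B^2))) * (((3*0*B^2 + 2*(0)*B + (K3)) * (A^2 + (B^2)) - (0*B^3 + (0)*B^2 + (K3)*B + ((P^2+R^2)/2 + K1 + K2*A)) * (2*B)) / (A^2 + (B^2))^2 + (0)) = 2 * Complex.I * ((A*R - B*P)/(A^2 + B^2)^2) * (((A*R - B*P)^2/(A^2 + B^2) + K1) + Complex.I * ((A*R - B*P)*(A*P+B*R)/(A^2 + B^2) + K3*A - K2*B)) := by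
  have hD : (2*(A^2 + B^2)^2) * (2*(A^2 + B^2)^2) ≠ 0 := by
    apply mul_ne_zero <;> exact mul_ne_zero two_ne_zero (pow_ne_zero _ hQ)
  have feBa : (((3*0*A^2 + 2*(R^2 + Complex.I*P*R)*A + (-2*B*P*R + Complex.I*(B*R^2 - B*P^2))) * (A^2 + (B^2)) - (0*A^3 + (R^2 + Complex.I*P*R)*A^2 + (-2*B*P*R + Complex.I*(B*R^2 - B*P^2))*A + (B^2*P^2 - Complex.I*B^2*P*R)) * (2*A)) / (A^2 + (B^2))^2 + (Complex.I*K3)) = (2*((2*(R^2 + Complex.I*P*R)*A + (-2*B*P*R + Complex.I*(B*R^2 - B*P^2))) * (A^2 + B^2) - ((R^2 + Complex.I*P*R)*A^2 + (-2*B*P*R + Complex.I*(B*R^2 - B*P^2))*A + (B^2*P^2 - Complex.I*B^2*P*R)) * (2*A)) + (Complex.I*K3)*(2*(A^2 + B^2)^2)) / (2*(A^2 + B^2)^2) := by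
    field_simp <;> ring
  have feBb : (((3*0*B^2 + 2*(P^2 - Complex.I*P*R)*B + (-2*A*P*R + Complex.I*(A*R^2 - A*P^2))) * (A^2 + (B^2)) - (0*B^3 + (P^2 - Complex.I*P*R)*B^2 + (-2*A*P*R + Complex.I*(A*R^2 - A*P^2))*B + (A^2*R^2 + Complex.I*A^2*P*R)) * (2*B)) / (A^2 + (B^2))^2 + (-Complex.I*K2)) = (2*((2*(P^2 - Complex.I*P*R)*B + (-2*A*P*R + Complex.I*(A*R^2 - A*P^2))) * (A^2 + B^2) - ((P^2 - Complex.I*P*R)*B^2 + (-2*A*P*R + Complex.I*(A*R^2 - A*P^2))*B + (A^2*R^2 + Complex.I*A^2*P*R)) * (2*B)) + (-Complex.I*K2)*(2*(A^2 + B^2)^2)) / (2*(A^2 + B^2)^2) := by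
    field_simp <;> ring
  have feBpa : (2*((B^2 - Complex.I*A*B)/(A^2 + B^2))*P + ((-2*A*B*R + Complex.I*(A^2*R - B^2*R))/(A^2 + B^2))) = ((2*(B^2 - Complex.I*A*B)*P + (-2*A*B*R + Complex.I*(A^2*R - B^2*R)))*(2*(A^2 + B^2))) / (2*(A^2 + B^2)^2) := by
    field_simp <;> ring
  have feBpb : (2*((A^2 + Complex.I*A*B)/(A^2 + B^2))*R + ((-2*A*B*P + Complex.I*(A^2*P - B^2*P))/(A^2 + B^2))) = ((2*(A^2 + Complex.I*A*B)*R + (-2*A*B*P + Complex.I*(A^2*P - B^2*P)))*(2*(A^2 + B^2))) / (2*(A^2 + B^2)^2) := by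
    field_simp <;> ring
  have feHa : (((3*0*A^2 + 2*(0)*A + (K2)) * (A^2 + (B^2)) - (0*A^3 + (0)*A^2 + (K2)*A + ((P^2+R^2)/2 + K1 + K3*B)) * (2*A)) / (A^2 + (B^2))^2 + (0)) = (2*(K2 * (A^2 + B^2) - (K2*A + ((P^2+R^2)/2 + K1 + K3*B)) * (2*A)) + (0)*(2*(A^2 + B^2)^2)) / (2*(A^2 + B^2)^2) := by
    field_simp <;> ring
  have feHb : (((3*0*B^2 + 2*(0)*B + (K3)) * (A^2 + (B^2)) - (0*B^3 + (0)*B^2 + (K3)*B + ((P^2+R^2)/2 + K1 + K2*A)) * (2*B)) / (A^2 + (B^2))^2 + (0)) = (2*(K3 * (A^2 + B^2) - (K3*B + ((P^2+R^2)/2 + K1 + K2*A)) * (2*B)) + (0)*(2*(A^2 + B^2)^2)) / (2*(A^2 + B^2)^2) := by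
    field_simp <;> ring
  have feHpa : (2*(1/(2*(A^2 + B^2)))*P + (0)) = (P*(2*(A^2 + B^2))) / (2*(A^2 + B^2)^2) := by
    field_simp <;> ring
  have feHpb : (2*(1/(2*(A^2 + B^2)))*R + (0)) = (R*(2*(A^2 + B^2))) / (2*(A^2 + B^2)^2) := by
    field_simp <;> ring
  rw [feBa, feBb, feBpa, feBpb, feHa, feHb, feHpa, feHpb,
    div_mul_div_comm, div_mul_div_comm, div_mul_div_comm, div_mul_div_comm,
    ← add_div, div_sub_div_same, div_sub_div_same, div_eq_iff hD]
  have h2 : Complex.I^2 = -1 := Complex.I_sq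
  have h3 : Complex.I^3 = -Complex.I := by rw [pow_succ, h2]; ring
  have h4 : Complex.I^4 = 1 := by rw [pow_succ, h3]; simp [Complex.I_mul_I]
  field_simp
  ring_nf
  simp only [h2, h3, h4]
  ring

set_option maxHeartbeats 8000000 in
/-- `{B, H} = 2 i λ B` on `U`. -/
theorem stmt1 (k1 k2 k3 : ℝ) (a b pa pb : ℝ) (hU : a ^ 2 + b ^ 2 ≠ 0) :
    PB (Bfun k1 k2 k3) (HC k1 k2 k3) a b pa pb =
      2 * Complex.I * (lam a b pa pb : ℂ) * Bfun k1 k2 k3 a b pa pb := by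
  have hQc : (a:ℂ)^2 + (b:ℂ)^2 ≠ 0 := by
    have : ((a^2+b^2 : ℝ):ℂ) ≠ 0 := Complex.ofReal_ne_zero.mpr hU
    push_cast at this; exact this
  have hQc2 : (b:ℂ)^2 + (a:ℂ)^2 ≠ 0 := by rw [add_comm]; exact hQc
  have eBa : pda (Bfun k1 k2 k3) a b pa pb = ((3*0*(a:ℂ)^2 + 2*((pb:ℂ)^2 + Complex.I*(pa:ℂ)*(pb:ℂ))*(a:ℂ) + (-2*(b:ℂ)*(pa:ℂ)*(pb:ℂ) + Complex.I*((b:ℂ)*(pb:ℂ)^2 - (b:ℂ)*(pa:ℂ)^2))) * ((a:ℂ)^2 + ((b:ℂ)^2)) - (0*(a:ℂ)^3 + ((pb:ℂ)^2 + Complex.I*(pa:ℂ)*(pb:ℂ))*(a:ℂ)^2 + (-2*(b:ℂ)*(pa:ℂ)*(pb:ℂ) + Complex.I*((b:ℂ)*(pb:ℂ)^2 - (b:ℂ)*(pa:ℂ)^2))*(a:ℂ) + ((b:ℂ)^2*(pa:ℂ)^2 - Complex.I*(b:ℂ)^2*(pa:ℂ)*(pb:ℂ))) * (2*(a:ℂ)))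 / ((a:ℂ)^2 + ((b:ℂ)^2))^2 + (Complex.I*(k3:ℂ)) := by
    have heq : (fun t : ℝ => Bfun k1 k2 k3 t b pa pb) = (fun t : ℝ => (0*(t:ℂ)^3 + ((pb:ℂ)^2 + Complex.I*(pa:ℂ)*(pb:ℂ))*(t:ℂ)^2 + (-2*(b:ℂ)*(pa:ℂ)*(pb:ℂ) + Complex.I*((b:ℂ)*(pb:ℂ)^2 - (b:ℂ)*(pa:ℂ)^2))*(t:ℂ) + ((b:ℂ)^2*(pa:ℂ)^2 - Complex.I*(b:ℂ)^2*(pa:ℂ)*(pb:ℂ))) / ((t:ℂ)^2 + ((b:ℂ)^2)) + (Complex.I*(k3:ℂ))*(t:ℂ) + ((k1:ℂ) - Complex.I*(k2:ℂ)*(b:ℂ))) := by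
      funext t
      simp only [Bfun, B1, B2, Jang, HC, HR, div_mul_eq_div_div]
      push_cast
      ring
    rw [pda, heq, (L1 (0) ((pb:ℂ)^2 + Complex.I*(pa:ℂ)*(pb:ℂ)) (-2*(b:ℂ)*(pa:ℂ)*(pb:ℂ) + Complex.I*((b:ℂ)*(pb:ℂ)^2 - (b:ℂ)*(pa:ℂ)^2)) ((b:ℂ)^2*(pa:ℂ)^2 - Complex.I*(b:ℂ)^2*(pa:ℂ)*(pb:ℂ)) ((b:ℂ)^2) (Complex.I*(k3:ℂ)) ((k1:ℂ) - Complex.I*(k2:ℂ)*(b:ℂ)) a hQc).deriv] <;> ring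
  have eBb : pdb (Bfun k1 k2 k3) a b pa pb = ((3*0*(b:ℂ)^2 + 2*((pa:ℂ)^2 - Complex.I*(pa:ℂ)*(pb:ℂ))*(b:ℂ) + (-2*(a:ℂ)*(pa:ℂ)*(pb:ℂ) + Complex.I*((a:ℂ)*(pb:ℂ)^2 - (a:ℂ)*(pa:ℂ)^2))) * ((a:ℂ)^2 + ((b:ℂ)^2)) - (0*(b:ℂ)^3 + ((pa:ℂ)^2 - Complex.I*(pa:ℂ)*(pb:ℂ))*(b:ℂ)^2 + (-2*(a:ℂ)*(pa:ℂ)*(pb:ℂ) + Complex.I*((a:ℂ)*(pb:ℂ)^2 - (a:ℂ)*(pa:ℂ)^2))*(b:ℂ) + ((a:ℂ)^2*(pb:ℂ)^2 + Complex.I*(a:ℂ)^2*(pa:ℂ)*(pb:ℂ))) * (2*(b:ℂ))) / ((a:ℂ)^2 + ((b:ℂ)^2))^2 + (-Complex.I*(k2:ℂ)) := by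
    have heq : (fun t : ℝ => Bfun k1 k2 k3 a t pa pb) = (fun t : ℝ => (0*(t:ℂ)^3 + ((pa:ℂ)^2 - Complex.I*(pa:ℂ)*(pb:ℂ))*(t:ℂ)^2 + (-2*(a:ℂ)*(pa:ℂ)*(pb:ℂ) + Complex.I*((a:ℂ)*(pb:ℂ)^2 - (a:ℂ)*(pa:ℂ)^2))*(t:ℂ) + ((a:ℂ)^2*(pb:ℂ)^2 + Complex.I*(a:ℂ)^2*(pa:ℂ)*(pb:ℂ))) / ((t:ℂ)^2 + ((a:ℂ)^2)) + (-Complex.I*(k2:ℂ))*(t:ℂ) + ((k1:ℂ) + Complex.I*(k3:ℂ)*(a:ℂ))) := by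
      funext t
      simp only [Bfun, B1, B2, Jang, HC, HR, div_mul_eq_div_div]
      push_cast
      ring
    rw [pdb, heq, (L1 (0) ((pa:ℂ)^2 - Complex.I*(pa:ℂ)*(pb:ℂ)) (-2*(a:ℂ)*(pa:ℂ)*(pb:ℂ) + Complex.I*((a:ℂ)*(pb:ℂ)^2 - (a:ℂ)*(pa:ℂ)^2)) ((a:ℂ)^2*(pb:ℂ)^2 + Complex.I*(a:ℂ)^2*(pa:ℂ)*(pb:ℂ)) ((a:ℂ)^2) (-Complex.I*(k2:ℂ)) ((k1:ℂ) + Complex.I*(k3:ℂ)*(a:ℂ)) b hQc2).deriv] <;> ring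
  have eBpa : pdpa (Bfun k1 k2 k3) a b pa pb = 2*(((b:ℂ)^2 - Complex.I*(a:ℂ)*(b:ℂ))/((a:ℂ)^2 + (b:ℂ)^2))*(pa:ℂ) + ((-2*(a:ℂ)*(b:ℂ)*(pb:ℂ) + Complex.I*((a:ℂ)^2*(pb:ℂ) - (b:ℂ)^2*(pb:ℂ)))/((a:ℂ)^2 + (b:ℂ)^2)) := by
    have heq : (fun t : ℝ => Bfun k1 k2 k3 a b t pb) = (fun t : ℝ => (((b:ℂ)^2 - Complex.I*(a:ℂ)*(b:ℂ))/((a:ℂ)^2 + (b:ℂ)^2))*(t:ℂ)^2 + ((-2*(a:ℂ)*(b:ℂ)*(pb:ℂ) + Complex.I*((a:ℂ)^2*(pb:ℂ) - (b:ℂ)^2*(pb:ℂ)))/((a:ℂ)^2 + (b:ℂ)^2))*(t:ℂ) + (((a:ℂ)^2*(pb:ℂ)^2 + Complex.I*(a:ℂ)*(b:ℂ)*(pb:ℂ)^2)/((a:ℂ)^2 + (b:ℂ)^2) + (k1:ℂ) + Complex.I*((k3:ℂ)*(a:ℂ) - (k2:ℂ)*(b:ℂ)))) := by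
      funext t
      simp only [Bfun, B1, B2, Jang, HC, HR, div_mul_eq_div_div]
      push_cast
      ring
    rw [pdpa, heq, (L2 (((b:ℂ)^2 - Complex.I*(a:ℂ)*(b:ℂ))/((a:ℂ)^2 + (b:ℂ)^2)) ((-2*(a:ℂ)*(b:ℂ)*(pb:ℂ) + Complex.I*((a:ℂ)^2*(pb:ℂ) - (b:ℂ)^2*(pb:ℂ)))/((a:ℂ)^2 + (b:ℂ)^2)) (((a:ℂ)^2*(pb:ℂ)^2 + Complex.I*(a:ℂ)*(b:ℂ)*(pb:ℂ)^2)/((a:ℂ)^2 + (b:ℂ)^2) + (k1:ℂ) + Complex.I*((k3:ℂ)*(a:ℂ) - (k2:ℂ)*(b:ℂ))) pa).deriv] <;> ring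
  have eBpb : pdpb (Bfun k1 k2 k3) a b pa pb = 2*(((a:ℂ)^2 + Complex.I*(a:ℂ)*(b:ℂ))/((a:ℂ)^2 + (b:ℂ)^2))*(pb:ℂ) + ((-2*(a:ℂ)*(b:ℂ)*(pa:ℂ) + Complex.I*((a:ℂ)^2*(pa:ℂ) - (b:ℂ)^2*(pa:ℂ)))/((a:ℂ)^2 + (b:ℂ)^2)) := by
    have heq : (fun t : ℝ => Bfun k1 k2 k3 a b pa t) = (fun t : ℝ => (((a:ℂ)^2 + Complex.I*(a:ℂ)*(b:ℂ))/((a:ℂ)^2 + (b:ℂ)^2))*(t:ℂ)^2 + ((-2*(a:ℂ)*(b:ℂ)*(pa:ℂ) + Complex.I*((a:ℂ)^2*(pa:ℂ) - (b:ℂ)^2*(pa:ℂ)))/((a:ℂ)^2 + (b:ℂ)^2))*(t:ℂ) + (((b:ℂ)^2*(pa:ℂ)^2 - Complex.I*(a:ℂ)*(b:ℂ)*(pa:ℂ)^2)/((a:ℂ)^2 + (b:ℂ)^2) + (k1:ℂ) + Complex.I*((k3:ℂ)*(a:ℂ) - (k2:ℂ)*(b:ℂ)))) := by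
      funext t
      simp only [Bfun, B1, B2, Jang, HC, HR, div_mul_eq_div_div]
      push_cast
      ring
    rw [pdpb, heq, (L2 (((a:ℂ)^2 + Complex.I*(a:ℂ)*(b:ℂ))/((a:ℂ)^2 + (b:ℂ)^2)) ((-2*(a:ℂ)*(b:ℂ)*(pa:ℂ) + Complex.I*((a:ℂ)^2*(pa:ℂ) - (b:ℂ)^2*(pa:ℂ)))/((a:ℂ)^2 + (b:ℂ)^2)) (((b:ℂ)^2*(pa:ℂ)^2 - Complex.I*(a:ℂ)*(b:ℂ)*(pa:ℂ)^2)/((a:ℂ)^2 + (b:ℂ)^2) + (k1:ℂ) + Complex.I*((k3:ℂ)*(a:ℂ) - (k2:ℂ)*(b:ℂ))) pb).deriv] <;> ring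
  have eHa : pda (HC k1 k2 k3) a b pa pb = ((3*0*(a:ℂ)^2 + 2*(0)*(a:ℂ) + ((k2:ℂ))) * ((a:ℂ)^2 + ((b:ℂ)^2)) - (0*(a:ℂ)^3 + (0)*(a:ℂ)^2 + ((k2:ℂ))*(a:ℂ) + (((pa:ℂ)^2+(pb:ℂ)^2)/2 + (k1:ℂ) + (k3:ℂ)*(b:ℂ))) * (2*(a:ℂ))) / ((a:ℂ)^2 + ((b:ℂ)^2))^2 + (0) := by
    have heq : (fun t : ℝ => HC k1 k2 k3 t b pa pb) = (fun t : ℝ => (0*(t:ℂ)^3 + (0)*(t:ℂ)^2 + ((k2:ℂ))*(t:ℂ) + (((pa:ℂ)^2+(pb:ℂ)^2)/2 + (k1:ℂ) + (k3:ℂ)*(b:ℂ))) / ((t:ℂ)^2 + ((b:ℂ)^2)) + (0)*(t:ℂ) + (0)) := by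
      funext t
      simp only [Bfun, B1, B2, Jang, HC, HR, div_mul_eq_div_div]
      push_cast
      ring
    rw [pda, heq, (L1 (0) (0) ((k2:ℂ)) (((pa:ℂ)^2+(pb:ℂ)^2)/2 + (k1:ℂ) + (k3:ℂ)*(b:ℂ)) ((b:ℂ)^2) (0) (0) a hQc).deriv] <;> ring
  have eHb : pdb (HC k1 k2 k3) a b pa pb = ((3*0*(b:ℂ)^2 + 2*(0)*(b:ℂ) + ((k3:ℂ))) * ((a:ℂ)^2 + ((b:ℂ)^2)) - (0*(b:ℂ)^3 + (0)*(b:ℂ)^2 + ((k3:ℂ))*(b:ℂ) + (((pa:ℂ)^2+(pb:ℂ)^2)/2 + (k1:ℂ) + (k2:ℂ)*(a:ℂ))) * (2*(b:ℂ))) / ((a:ℂ)^2 + ((b:ℂ)^2))^2 + (0) := by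
    have heq : (fun t : ℝ => HC k1 k2 k3 a t pa pb) = (fun t : ℝ => (0*(t:ℂ)^3 + (0)*(t:ℂ)^2 + ((k3:ℂ))*(t:ℂ) + (((pa:ℂ)^2+(pb:ℂ)^2)/2 + (k1:ℂ) + (k2:ℂ)*(a:ℂ))) / ((t:ℂ)^2 + ((a:ℂ)^2)) + (0)*(t:ℂ) + (0)) := by
      funext t
      simp only [Bfun, B1, B2, Jang, HC, HR, div_mul_eq_div_div]
      push_cast
      ring
    rw [pdb, heq, (L1 (0) (0) ((k3:ℂ)) (((pa:ℂ)^2+(pb:ℂ)^2)/2 + (k1:ℂ) + (k2:ℂ)*(a:ℂ)) ((a:ℂ)^2) (0) (0) b hQc2).deriv] <;> ring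
  have eHpa : pdpa (HC k1 k2 k3) a b pa pb = 2*(1/(2*((a:ℂ)^2 + (b:ℂ)^2)))*(pa:ℂ) + (0) := by
    have heq : (fun t : ℝ => HC k1 k2 k3 a b t pb) = (fun t : ℝ => (1/(2*((a:ℂ)^2 + (b:ℂ)^2)))*(t:ℂ)^2 + (0)*(t:ℂ) + ((pb:ℂ)^2/(2*((a:ℂ)^2 + (b:ℂ)^2)) + ((k1:ℂ)+(k2:ℂ)*(a:ℂ)+(k3:ℂ)*(b:ℂ))/((a:ℂ)^2 + (b:ℂ)^2))) := by
      funext t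
      simp only [Bfun, B1, B2, Jang, HC, HR, div_mul_eq_div_div]
      push_cast
      ring
    rw [pdpa, heq, (L2 (1/(2*((a:ℂ)^2 + (b:ℂ)^2))) (0) ((pb:ℂ)^2/(2*((a:ℂ)^2 + (b:ℂ)^2)) + ((k1:ℂ)+(k2:ℂ)*(a:ℂ)+(k3:ℂ)*(b:ℂ))/((a:ℂ)^2 + (b:ℂ)^2)) pa).deriv] <;> ring
  have eHpb : pdpb (HC k1 k2 k3) a b pa pb = 2*(1/(2*((a:ℂ)^2 + (b:ℂ)^2)))*(pb:ℂ) + (0) := by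
    have heq : (fun t : ℝ => HC k1 k2 k3 a b pa t) = (fun t : ℝ => (1/(2*((a:ℂ)^2 + (b:ℂ)^2)))*(t:ℂ)^2 + (0)*(t:ℂ) + ((pa:ℂ)^2/(2*((a:ℂ)^2 + (b:ℂ)^2)) + ((k1:ℂ)+(k2:ℂ)*(a:ℂ)+(k3:ℂ)*(b:ℂ))/((a:ℂ)^2 + (b:ℂ)^2))) := by
      funext t
      simp only [Bfun, B1, B2, Jang, HC, HR, div_mul_eq_div_div]
      push_cast
      ring
    rw [pdpb, heq, (L2 (1/(2*((a:ℂ)^2 + (b:ℂ)^2))) (0) ((pa:ℂ)^2/(2*((a:ℂ)^2 + (b:ℂ)^2)) + ((k1:ℂ)+(k2:ℂ)*(a:ℂ)+(k3:ℂ)*(b:ℂ))/((a:ℂ)^2 + (b:ℂ)^2)) pb).deriv] <;> ring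
  rw [PB, eBa, eBb, eBpa, eBpb, eHa, eHb, eHpa, eHpb,
    final (a:ℂ) (b:ℂ) (pa:ℂ) (pb:ℂ) (k1:ℂ) (k2:ℂ) (k3:ℂ) hQc]
  simp only [Bfun, B1, B2, Jang, lam]
  push_cast
  field_simp
end
end

section
/- (Proposition 1) The complex function J₃₄ = A·B* is a constant of the motion for H, i.e. {A·B*, H} = 0 at every point of U, where B* denotes the complex conjugate of B. -/
set_option maxHeartbeats 1600000
noncomputable section

open Complex

lemma prodEq (k1 k2 k3 a b pa pb : ℝ) :
    Afun a b pa pb * (starRingEnd ℂ) (Bfun k1 k2 k3 a b pa pb)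
      = ((J3ex k1 k2 k3 a b pa pb : ℝ) : ℂ) - Complex.I * ((J4ex k1 k2 k3 a b pa pb : ℝ) : ℂ) := by
  by_cases hd : a^2 + b^2 = 0
  · have ha : a = 0 := by nlinarith [sq_nonneg a, sq_nonneg b]
    have hb : b = 0 := by nlinarith [sq_nonneg a, sq_nonneg b]
    subst ha hb
    simp [Afun, A1, A2, J3ex, J4ex, Jang]
  · apply Complex.ext <;>
      simp only [Afun, Bfun, map_add, map_mul, Complex.conj_ofReal, Complex.conj_I,
        Complex.add_re, Complex.add_im, Complex.mul_re, Complex.mul_im,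
        Complex.ofReal_re, Complex.ofReal_im, Complex.I_re, Complex.I_im,
        Complex.neg_re, Complex.neg_im, Complex.sub_re, Complex.sub_im] <;>
      · simp only [J3ex, J4ex, A1, A2, B1, B2, Jang]
        field_simp
        ring

lemma cubic_hasDerivAt (p3 p2 p1 p0 t : ℝ) :
    HasDerivAt (fun s : ℝ => p3*s^3+p2*s^2+p1*s+p0) (3*p3*t^2+2*p2*t+p1) t := by
  have h := ((((hasDerivAt_pow 3 t).const_mul p3).add ((hasDerivAt_pow 2 t).const_mul p2)).add
      ((hasDerivAt_id t).const_mul p1)).add_const p0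
  convert h using 1
  · rfl
  · rfl
  · rfl
  push_cast; ring

lemma hder1 (p3 p2 p1 p0 c t : ℝ) (h : t^2 + c ≠ 0) :
    HasDerivAt (fun s : ℝ => (p3*s^3+p2*s^2+p1*s+p0)/(s^2+c))
      (((3*p3*t^2+2*p2*t+p1)*(t^2+c) - (p3*t^3+p2*t^2+p1*t+p0)*(2*t))/(t^2+c)^2) t := by
  have hn := cubic_hasDerivAt p3 p2 p1 p0 t
  have hd : HasDerivAt (fun s : ℝ => s^2+c) (2*t) t := by
    simpa using (hasDerivAt_pow 2 t).add_const c
  exact hn.div hd h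

lemma hder2 (p3 p2 p1 p0 e t : ℝ) :
    HasDerivAt (fun s : ℝ => (p3*s^3+p2*s^2+p1*s+p0)/e) ((3*p3*t^2+2*p2*t+p1)/e) t :=
  (cubic_hasDerivAt p3 p2 p1 p0 t).div_const e

lemma assemble (x3a x4a x3b x4b x3pa x4pa x3pb x4pb ha hb hpa hpb : ℝ)
    (h3 : x3a*hpa + x3b*hpb - x3pa*ha - x3pb*hb = 0)
    (h4 : x4a*hpa + x4b*hpb - x4pa*ha - x4pb*hb = 0) :
    ((x3a:ℂ) - Complex.I*(x4a:ℂ))*(hpa:ℂ) + ((x3b:ℂ) - Complex.I*(x4b:ℂ))*(hpb:ℂ)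
      - ((x3pa:ℂ) - Complex.I*(x4pa:ℂ))*(ha:ℂ) - ((x3pb:ℂ) - Complex.I*(x4pb:ℂ))*(hb:ℂ) = 0 := by
  calc ((x3a:ℂ) - Complex.I*(x4a:ℂ))*(hpa:ℂ) + ((x3b:ℂ) - Complex.I*(x4b:ℂ))*(hpb:ℂ)
      - ((x3pa:ℂ) - Complex.I*(x4pa:ℂ))*(ha:ℂ) - ((x3pb:ℂ) - Complex.I*(x4pb:ℂ))*(hb:ℂ)
      = ((x3a*hpa + x3b*hpb - x3pa*ha - x3pb*hb : ℝ) : ℂ)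
        - Complex.I * ((x4a*hpa + x4b*hpb - x4pa*ha - x4pb*hb : ℝ) : ℂ) := by push_cast; ring
    _ = 0 := by rw [h3, h4]; simp

lemma deriv_combo {f3 f4 : ℝ → ℝ} {d3 d4 : ℝ} {t : ℝ}
    (h3 : HasDerivAt f3 d3 t) (h4 : HasDerivAt f4 d4 t) :
    deriv (fun s => ((f3 s : ℝ) : ℂ) - Complex.I * ((f4 s : ℝ) : ℂ)) t
      = (d3 : ℂ) - Complex.I * (d4 : ℂ) :=
  ((h3.ofReal_comp).sub ((h4.ofReal_comp).const_mul Complex.I)).deriv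

/-- Proposition 1: `J₃₄ = A·B*` is a constant of the motion: `{A·B*, H} = 0`. -/
theorem stmt2 (k1 k2 k3 : ℝ) (a b pa pb : ℝ) (hU : a ^ 2 + b ^ 2 ≠ 0) :
    PB (fun a b pa pb => Afun a b pa pb * (starRingEnd ℂ) (Bfun k1 k2 k3 a b pa pb))
      (HC k1 k2 k3) a b pa pb = 0 := by
  have hf : (fun a b pa pb => Afun a b pa pb * (starRingEnd ℂ) (Bfun k1 k2 k3 a b pa pb))
      = fun a b pa pb => ((J3ex k1 k2 k3 a b pa pb : ℝ) : ℂ)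
          - Complex.I * ((J4ex k1 k2 k3 a b pa pb : ℝ) : ℂ) := by
    funext a b pa pb; exact prodEq k1 k2 k3 a b pa pb
  rw [hf]
  -- J3ex derivatives
  have e3a : (fun t => J3ex k1 k2 k3 t b pa pb)
      = fun s : ℝ => (0*s^3+(pb^2+k1+2*k3*b)*s^2+(-(2*k2*b^2))*s+(-(b^2*pa^2)-k1*b^2))/(s^2+b^2) := by
    funext t
    by_cases h : t^2 + b^2 = 0
    · have ht : t = 0 := by nlinarith [sq_nonneg t, sq_nonneg b]
      have hb : b = 0 := by nlinarith [sq_nonneg t, sq_nonneg b]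
      rw [ht, hb]; simp [J3ex, Jang]
    · simp only [J3ex, Jang]; field_simp; ring
  have h3a := hder1 0 (pb^2+k1+2*k3*b) (-(2*k2*b^2)) (-(b^2*pa^2)-k1*b^2) (b^2) a hU
  rw [← e3a] at h3a
  have e3b : (fun t => J3ex k1 k2 k3 a t pa pb)
      = fun s : ℝ => (0*s^3+(-(pa^2)-k1-2*k2*a)*s^2+(2*k3*a^2)*s+(a^2*pb^2+k1*a^2))/(s^2+a^2) := by
    funext t
    by_cases h : t^2 + a^2 = 0
    · have ht : t = 0 := by nlinarith [sq_nonneg t, sq_nonneg a]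
      have ha : a = 0 := by nlinarith [sq_nonneg t, sq_nonneg a]
      rw [ht, ha]; simp [J3ex, Jang]
    · have h2 : a^2 + t^2 ≠ 0 := fun hh => h (by linarith)
      simp only [J3ex, Jang]; field_simp; ring
  have h3b := hder1 0 (-(pa^2)-k1-2*k2*a) (2*k3*a^2) (a^2*pb^2+k1*a^2) (a^2) b
    (by rw [add_comm]; exact hU)
  rw [← e3b] at h3b
  have e3pa : (fun t => J3ex k1 k2 k3 a b t pb)
      = fun s : ℝ => (0*s^3+(-(b^2))*s^2+0*s+(a^2*pb^2+k1*(a^2-b^2)-2*k2*a*b^2+2*k3*a^2*b))/(a^2+b^2) := by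
    funext t; simp only [J3ex, Jang]; field_simp; ring
  have h3pa := hder2 0 (-(b^2)) 0 (a^2*pb^2+k1*(a^2-b^2)-2*k2*a*b^2+2*k3*a^2*b) (a^2+b^2) pa
  rw [← e3pa] at h3pa
  have e3pb : (fun t => J3ex k1 k2 k3 a b pa t)
      = fun s : ℝ => (0*s^3+(a^2)*s^2+0*s+(-(b^2*pa^2)+k1*(a^2-b^2)-2*k2*a*b^2+2*k3*a^2*b))/(a^2+b^2) := by
    funext t; simp only [J3ex, Jang]; field_simp; ring
  have h3pb := hder2 0 (a^2) 0 (-(b^2*pa^2)+k1*(a^2-b^2)-2*k2*a*b^2+2*k3*a^2*b) (a^2+b^2) pb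
  rw [← e3pb] at h3pb
  -- J4ex derivatives
  have e4a : (fun t => J4ex k1 k2 k3 t b pa pb)
      = fun s : ℝ => (k3*s^3+(pa*pb-k2*b)*s^2+(-(b*pb^2)-b*pa^2-2*k1*b-k3*b^2)*s+(b^2*pa*pb+k2*b^3))/(s^2+b^2) := by
    funext t
    by_cases h : t^2 + b^2 = 0
    · have ht : t = 0 := by nlinarith [sq_nonneg t, sq_nonneg b]
      have hb : b = 0 := by nlinarith [sq_nonneg t, sq_nonneg b]
      rw [ht, hb]; simp [J4ex, Jang]
    · simp only [J4ex, Jang]; field_simp; ring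
  have h4a := hder1 k3 (pa*pb-k2*b) (-(b*pb^2)-b*pa^2-2*k1*b-k3*b^2) (b^2*pa*pb+k2*b^3) (b^2) a hU
  rw [← e4a] at h4a
  have e4b : (fun t => J4ex k1 k2 k3 a t pa pb)
      = fun s : ℝ => (k2*s^3+(pa*pb-k3*a)*s^2+(-(a*pb^2)-a*pa^2-2*k1*a-k2*a^2)*s+(a^2*pa*pb+k3*a^3))/(s^2+a^2) := by
    funext t
    by_cases h : t^2 + a^2 = 0
    · have ht : t = 0 := by nlinarith [sq_nonneg t, sq_nonneg a]
      have ha : a = 0 := by nlinarith [sq_nonneg t, sq_nonneg a]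
      rw [ht, ha]; simp [J4ex, Jang]
    · have h2 : a^2 + t^2 ≠ 0 := fun hh => h (by linarith)
      simp only [J4ex, Jang]; field_simp; ring
  have h4b := hder1 k2 (pa*pb-k3*a) (-(a*pb^2)-a*pa^2-2*k1*a-k2*a^2) (a^2*pa*pb+k3*a^3) (a^2) b
    (by rw [add_comm]; exact hU)
  rw [← e4b] at h4b
  have e4pa : (fun t => J4ex k1 k2 k3 a b t pb)
      = fun s : ℝ => (0*s^3+(-(a*b))*s^2+(a^2*pb+b^2*pb)*s+(-(a*b*pb^2)-2*k1*a*b-k2*a^2*b+k2*b^3+k3*a^3-k3*a*b^2))/(a^2+b^2) := by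
    funext t; simp only [J4ex, Jang]; field_simp; ring
  have h4pa := hder2 0 (-(a*b)) (a^2*pb+b^2*pb) (-(a*b*pb^2)-2*k1*a*b-k2*a^2*b+k2*b^3+k3*a^3-k3*a*b^2) (a^2+b^2) pa
  rw [← e4pa] at h4pa
  have e4pb : (fun t => J4ex k1 k2 k3 a b pa t)
      = fun s : ℝ => (0*s^3+(-(a*b))*s^2+(a^2*pa+b^2*pa)*s+(-(a*b*pa^2)-2*k1*a*b-k2*a^2*b+k2*b^3+k3*a^3-k3*a*b^2))/(a^2+b^2) := by
    funext t; simp only [J4ex, Jang]; field_simp; ring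
  have h4pb := hder2 0 (-(a*b)) (a^2*pa+b^2*pa) (-(a*b*pa^2)-2*k1*a*b-k2*a^2*b+k2*b^3+k3*a^3-k3*a*b^2) (a^2+b^2) pb
  rw [← e4pb] at h4pb
  -- HR derivatives
  have eHa : (fun t => HR k1 k2 k3 t b pa pb)
      = fun s : ℝ => (0*s^3+0*s^2+k2*s+((pa^2+pb^2)/2+k1+k3*b))/(s^2+b^2) := by
    funext t
    by_cases h : t^2 + b^2 = 0
    · have ht : t = 0 := by nlinarith [sq_nonneg t, sq_nonneg b]
      have hb : b = 0 := by nlinarith [sq_nonneg t, sq_nonneg b]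
      rw [ht, hb]; simp [HR]
    · simp only [HR]; field_simp; ring
  have hHa := hder1 0 0 k2 ((pa^2+pb^2)/2+k1+k3*b) (b^2) a hU
  rw [← eHa] at hHa
  have eHb : (fun t => HR k1 k2 k3 a t pa pb)
      = fun s : ℝ => (0*s^3+0*s^2+k3*s+((pa^2+pb^2)/2+k1+k2*a))/(s^2+a^2) := by
    funext t
    by_cases h : t^2 + a^2 = 0
    · have ht : t = 0 := by nlinarith [sq_nonneg t, sq_nonneg a]
      have ha : a = 0 := by nlinarith [sq_nonneg t, sq_nonneg a]
      rw [ht, ha]; simp [HR]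
    · have h2 : a^2 + t^2 ≠ 0 := fun hh => h (by linarith)
      simp only [HR]; field_simp; ring
  have hHb := hder1 0 0 k3 ((pa^2+pb^2)/2+k1+k2*a) (a^2) b (by rw [add_comm]; exact hU)
  rw [← eHb] at hHb
  have eHpa : (fun t => HR k1 k2 k3 a b t pb)
      = fun s : ℝ => (0*s^3+1*s^2+0*s+(pb^2+2*k1+2*k2*a+2*k3*b))/(2*(a^2+b^2)) := by
    funext t; simp only [HR]; field_simp; ring
  have hHpa := hder2 0 1 0 (pb^2+2*k1+2*k2*a+2*k3*b) (2*(a^2+b^2)) pa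
  rw [← eHpa] at hHpa
  have eHpb : (fun t => HR k1 k2 k3 a b pa t)
      = fun s : ℝ => (0*s^3+1*s^2+0*s+(pa^2+2*k1+2*k2*a+2*k3*b))/(2*(a^2+b^2)) := by
    funext t; simp only [HR]; field_simp; ring
  have hHpb := hder2 0 1 0 (pa^2+2*k1+2*k2*a+2*k3*b) (2*(a^2+b^2)) pb
  rw [← eHpb] at hHpb
  -- assemble
  simp only [PB, pda, pdb, pdpa, pdpb, HC]
  rw [deriv_combo h3a h4a, deriv_combo h3b h4b, deriv_combo h3pa h4pa, deriv_combo h3pb h4pb,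
    hHa.ofReal_comp.deriv, hHb.ofReal_comp.deriv, hHpa.ofReal_comp.deriv, hHpb.ofReal_comp.deriv]
  have hU2 : b^2 + a^2 ≠ 0 := by rw [add_comm]; exact hU
  apply assemble
  · field_simp
    ring
  · field_simp
    ring
end
end

section
/- The real function J₃ = Re(A·B*) equals J·(a p_b + b p_a)/(a² + b²) + 2[ (k₁/2)(a² − b²)/(a² + b²) − k₂ a b²/(a² + b²) + k₃ a² b/(a² + b²) ], and it is a first integral of H: {J₃, H} = 0 at every point of U. -/
noncomputable section

open Complex

set_option maxHeartbeats 1000000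

lemma deriv_cmul' (c x : ℝ) : deriv (fun t : ℝ => c * t) x = c := by
  simpa using ((hasDerivAt_id x).const_mul c).deriv

lemma deriv_mulc' (c x : ℝ) : deriv (fun t : ℝ => t * c) x = c := by
  simpa using ((hasDerivAt_id x).mul_const c).deriv

lemma J3eq' (k1 k2 k3 a b pa pb : ℝ) (h : a ^ 2 + b ^ 2 ≠ 0) :
    J3fun k1 k2 k3 a b pa pb = J3ex k1 k2 k3 a b pa pb := by
  simp only [J3fun, Afun, Bfun, A1, A2, B1, B2, J3ex, Jang, map_add, map_mul, Complex.conj_I,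
    Complex.conj_ofReal, Complex.add_re, Complex.mul_re, Complex.mul_im, Complex.add_im,
    Complex.I_re, Complex.I_im, Complex.ofReal_re, Complex.ofReal_im, Complex.neg_re,
    Complex.neg_im]
  field_simp
  ring

/-- `J₃ = Re (A·B*)` has the stated coordinate expression and `{J₃, H} = 0`. -/
theorem stmt3 (k1 k2 k3 : ℝ) (a b pa pb : ℝ) (hU : a ^ 2 + b ^ 2 ≠ 0) :
    J3fun k1 k2 k3 a b pa pb = J3ex k1 k2 k3 a b pa pb ∧
      PBR (J3fun k1 k2 k3) (HR k1 k2 k3) a b pa pb = 0 := by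
  have h2 : (2 : ℝ) * (a ^ 2 + b ^ 2) ≠ 0 := mul_ne_zero two_ne_zero hU
  refine ⟨J3eq' k1 k2 k3 a b pa pb hU, ?_⟩
  have hnea : ∀ᶠ t in nhds a, t ^ 2 + b ^ 2 ≠ 0 := by
    have hc : ContinuousAt (fun t : ℝ => t ^ 2 + b ^ 2) a := by fun_prop
    exact hc.eventually_ne hU
  have hneb : ∀ᶠ t in nhds b, a ^ 2 + t ^ 2 ≠ 0 := by
    have hc : ContinuousAt (fun t : ℝ => a ^ 2 + t ^ 2) b := by fun_prop
    exact hc.eventually_ne hU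
  have e1 : pdaR (J3fun k1 k2 k3) a b pa pb = deriv (fun t => J3ex k1 k2 k3 t b pa pb) a := by
    unfold pdaR
    exact Filter.EventuallyEq.deriv_eq (hnea.mono fun t ht => J3eq' k1 k2 k3 t b pa pb ht)
  have e2 : pdbR (J3fun k1 k2 k3) a b pa pb = deriv (fun t => J3ex k1 k2 k3 a t pa pb) b := by
    unfold pdbR
    exact Filter.EventuallyEq.deriv_eq (hneb.mono fun t ht => J3eq' k1 k2 k3 a t pa pb ht)
  have e3 : pdpaR (J3fun k1 k2 k3) a b pa pb = deriv (fun t => J3ex k1 k2 k3 a b t pb) pa := by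
    unfold pdpaR
    congr 1
    funext t
    exact J3eq' k1 k2 k3 a b t pb hU
  have e4 : pdpbR (J3fun k1 k2 k3) a b pa pb = deriv (fun t => J3ex k1 k2 k3 a b pa t) pb := by
    unfold pdpbR
    congr 1
    funext t
    exact J3eq' k1 k2 k3 a b pa t hU
  have dJa : deriv (fun t => J3ex k1 k2 k3 t b pa pb) a =
      ((2 * a * pb ^ 2 + 2 * k1 * a - 2 * k2 * b ^ 2 + 4 * k3 * a * b) * (a ^ 2 + b ^ 2)
        - (a ^ 2 * pb ^ 2 - b ^ 2 * pa ^ 2 + k1 * (a ^ 2 - b ^ 2) - 2 * k2 * a * b ^ 2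
            + 2 * k3 * a ^ 2 * b) * (2 * a)) / (a ^ 2 + b ^ 2) ^ 2 := by
    simp (disch := first | assumption | (fun_prop (disch := assumption))) only [J3ex, Jang,
      deriv_fun_div, deriv_fun_add, deriv_fun_sub, deriv_fun_mul, deriv_pow_field, deriv_const, deriv_id'',
      deriv_const_mul, deriv_mul_const, deriv_cmul', deriv_mulc']
    field_simp
    ring
  have dJb : deriv (fun t => J3ex k1 k2 k3 a t pa pb) b =
      ((-2 * b * pa ^ 2 - 2 * k1 * b - 4 * k2 * a * b + 2 * k3 * a ^ 2) * (a ^ 2 + b ^ 2)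
        - (a ^ 2 * pb ^ 2 - b ^ 2 * pa ^ 2 + k1 * (a ^ 2 - b ^ 2) - 2 * k2 * a * b ^ 2
            + 2 * k3 * a ^ 2 * b) * (2 * b)) / (a ^ 2 + b ^ 2) ^ 2 := by
    simp (disch := first | assumption | (fun_prop (disch := assumption))) only [J3ex, Jang,
      deriv_fun_div, deriv_fun_add, deriv_fun_sub, deriv_fun_mul, deriv_pow_field, deriv_const, deriv_id'',
      deriv_const_mul, deriv_mul_const, deriv_cmul', deriv_mulc']
    field_simp
    ring
  have dJpa : deriv (fun t => J3ex k1 k2 k3 a b t pb) pa =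
      -2 * b ^ 2 * pa / (a ^ 2 + b ^ 2) := by
    simp (disch := first | assumption | (fun_prop (disch := assumption))) only [J3ex, Jang,
      deriv_fun_div, deriv_fun_add, deriv_fun_sub, deriv_fun_mul, deriv_pow_field, deriv_const, deriv_id'',
      deriv_const_mul, deriv_mul_const, deriv_cmul', deriv_mulc']
    field_simp
    ring
  have dJpb : deriv (fun t => J3ex k1 k2 k3 a b pa t) pb =
      2 * a ^ 2 * pb / (a ^ 2 + b ^ 2) := by
    simp (disch := first | assumption | (fun_prop (disch := assumption))) only [J3ex, Jang,
      deriv_fun_div, deriv_fun_add, deriv_fun_sub, deriv_fun_mul, deriv_pow_field, deriv_const, deriv_id'',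
      deriv_const_mul, deriv_mul_const, deriv_cmul', deriv_mulc']
    field_simp
    ring
  have dHa : deriv (fun t => HR k1 k2 k3 t b pa pb) a =
      (k2 * (a ^ 2 + b ^ 2) - (pa ^ 2 + pb ^ 2) * a - (k1 + k2 * a + k3 * b) * (2 * a))
        / (a ^ 2 + b ^ 2) ^ 2 := by
    simp (disch := first | assumption | (fun_prop (disch := assumption))) only [HR,
      deriv_fun_div, deriv_fun_add, deriv_fun_sub, deriv_fun_mul, deriv_pow_field, deriv_const, deriv_id'',
      deriv_const_mul, deriv_mul_const, deriv_cmul', deriv_mulc']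
    field_simp
    ring
  have dHb : deriv (fun t => HR k1 k2 k3 a t pa pb) b =
      (k3 * (a ^ 2 + b ^ 2) - (pa ^ 2 + pb ^ 2) * b - (k1 + k2 * a + k3 * b) * (2 * b))
        / (a ^ 2 + b ^ 2) ^ 2 := by
    simp (disch := first | assumption | (fun_prop (disch := assumption))) only [HR,
      deriv_fun_div, deriv_fun_add, deriv_fun_sub, deriv_fun_mul, deriv_pow_field, deriv_const, deriv_id'',
      deriv_const_mul, deriv_mul_const, deriv_cmul', deriv_mulc']
    field_simp
    ring
  have dHpa : deriv (fun t => HR k1 k2 k3 a b t pb) pa = pa / (a ^ 2 + b ^ 2) := by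
    simp (disch := first | assumption | (fun_prop (disch := assumption))) only [HR,
      deriv_fun_div, deriv_fun_add, deriv_fun_sub, deriv_fun_mul, deriv_pow_field, deriv_const, deriv_id'',
      deriv_const_mul, deriv_mul_const, deriv_cmul', deriv_mulc']
    field_simp
    ring
  have dHpb : deriv (fun t => HR k1 k2 k3 a b pa t) pb = pb / (a ^ 2 + b ^ 2) := by
    simp (disch := first | assumption | (fun_prop (disch := assumption))) only [HR,
      deriv_fun_div, deriv_fun_add, deriv_fun_sub, deriv_fun_mul, deriv_pow_field, deriv_const, deriv_id'',
      deriv_const_mul, deriv_mul_const, deriv_cmul', deriv_mulc']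
    field_simp
    ring
  simp only [PBR, pdaR, pdbR, pdpaR, pdpbR] at e1 e2 e3 e4 ⊢
  rw [e1, e2, e3, e4, dJa, dJb, dJpa, dJpb, dHa, dHb, dHpa, dHpb]
  field_simp
  ring
end
end

section
/- The squared modulus of B satisfies, at every point of U, the identity B·B* = 2J²H + 2J(k₃ p_a − k₂ p_b) + k₁² + (k₂ b − k₃ a)². -/
noncomputable section

open Complex

/-- `B·B* = 2J²H + 2J(k₃ p_a - k₂ p_b) + k₁² + (k₂ b - k₃ a)²`. -/
theorem stmt5 (k1 k2 k3 : ℝ) (a b pa pb : ℝ) (hU : a ^ 2 + b ^ 2 ≠ 0) :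
    Bfun k1 k2 k3 a b pa pb * (starRingEnd ℂ) (Bfun k1 k2 k3 a b pa pb) =
      ((2 * (Jang a b pa pb) ^ 2 * HR k1 k2 k3 a b pa pb
        + 2 * Jang a b pa pb * (k3 * pa - k2 * pb)
        + k1 ^ 2 + (k2 * b - k3 * a) ^ 2 : ℝ) : ℂ) := by
  have h : Bfun k1 k2 k3 a b pa pb * (starRingEnd ℂ) (Bfun k1 k2 k3 a b pa pb)
      = ((B1 k1 a b pa pb ^ 2 + B2 k2 k3 a b pa pb ^ 2 : ℝ) : ℂ) := by
    simp [Bfun, Complex.ext_iff, Complex.mul_re, Complex.mul_im]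
    constructor <;> · simp [← Complex.ofReal_pow]; ring
  rw [h]
  norm_cast
  unfold B1 B2 HR Jang
  field_simp
  ring
end
end

section
/- With Ω₁ = dA₁ ∧ dB₁ + dA₂ ∧ dB₂ and Ω₂ = −dA₁ ∧ dB₂ + dA₂ ∧ dB₁, the 4-forms Ω₁ ∧ Ω₁, Ω₂ ∧ Ω₂, and Ω₁ ∧ Ω₂ all vanish identically on U. Equivalently, writing α_{jk}(x) = Ω₁(x)(e_j, e_k) and β_{jk}(x) = Ω₂(x)(e_j, e_k) for the components in the standard basis e₁,…,e₄ of ℝ⁴, one has at every point of U: α₁₂α₃₄ − α₁₃α₂₄ + α₁₄α₂₃ = 0, β₁₂β₃₄ − β₁₃β₂₄ + β₁₄β₂₃ = 0, and α₁₂β₃₄ + β₁₂α₃₄ − α₁₃β₂₄ − β₁₃α₂₄ + α₁₄β₂₃ + β₁₄α₂₃ = 0. -/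
noncomputable section

open Complex

-- derivative lemmas
lemma dA1a (a b pa pb : ℝ) (h : a^2+b^2 ≠ 0) :
    pdaR A1 a b pa pb = (2*a*(a^2+b^2) - (a^2-b^2)*(2*a))/(a^2+b^2)^2 := by
  unfold pdaR A1
  have hn : HasDerivAt (fun t:ℝ => t^2 - b^2) (2*a) a := by
    simpa using (hasDerivAt_pow 2 a).sub_const (b^2)
  have hd : HasDerivAt (fun t:ℝ => t^2 + b^2) (2*a) a := by
    simpa using (hasDerivAt_pow 2 a).add_const (b^2)
  exact (hn.div hd h).deriv

lemma dA1b (a b pa pb : ℝ) (h : a^2+b^2 ≠ 0) :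
    pdbR A1 a b pa pb = (-(2*b)*(a^2+b^2) - (a^2-b^2)*(2*b))/(a^2+b^2)^2 := by
  unfold pdbR A1
  have hn : HasDerivAt (fun t:ℝ => a^2 - t^2) (-(2*b)) b := by
    simpa using (hasDerivAt_pow 2 b).const_sub (a^2)
  have hd : HasDerivAt (fun t:ℝ => a^2 + t^2) (2*b) b := by
    simpa using (hasDerivAt_pow 2 b).const_add (a^2)
  exact (hn.div hd h).deriv

lemma dA1pa (a b pa pb : ℝ) : pdpaR A1 a b pa pb = 0 := by simp [pdpaR, A1]
lemma dA1pb (a b pa pb : ℝ) : pdpbR A1 a b pa pb = 0 := by simp [pdpbR, A1]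

lemma dA2a (a b pa pb : ℝ) (h : a^2+b^2 ≠ 0) :
    pdaR A2 a b pa pb = (2*b*(a^2+b^2) - 2*a*b*(2*a))/(a^2+b^2)^2 := by
  unfold pdaR A2
  have hn : HasDerivAt (fun t:ℝ => 2*t*b) (2*b) a := by
    simpa [mul_assoc] using ((hasDerivAt_id a).const_mul 2).mul_const b
  have hd : HasDerivAt (fun t:ℝ => t^2 + b^2) (2*a) a := by
    simpa using (hasDerivAt_pow 2 a).add_const (b^2)
  exact (hn.div hd h).deriv

lemma dA2b (a b pa pb : ℝ) (h : a^2+b^2 ≠ 0) :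
    pdbR A2 a b pa pb = (2*a*(a^2+b^2) - 2*a*b*(2*b))/(a^2+b^2)^2 := by
  unfold pdbR A2
  have hn : HasDerivAt (fun t:ℝ => 2*a*t) (2*a) b := by
    simpa using (hasDerivAt_id b).const_mul (2*a)
  have hd : HasDerivAt (fun t:ℝ => a^2 + t^2) (2*b) b := by
    simpa using (hasDerivAt_pow 2 b).const_add (a^2)
  exact (hn.div hd h).deriv

lemma dA2pa (a b pa pb : ℝ) : pdpaR A2 a b pa pb = 0 := by simp [pdpaR, A2]
lemma dA2pb (a b pa pb : ℝ) : pdpbR A2 a b pa pb = 0 := by simp [pdpbR, A2]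

lemma dB1a (k1 a b pa pb : ℝ) (h : a^2+b^2 ≠ 0) :
    pdaR (B1 k1) a b pa pb
      = (2*(a*pb-b*pa)*pb*(a^2+b^2) - (a*pb-b*pa)^2*(2*a))/(a^2+b^2)^2 := by
  unfold pdaR B1 Jang
  have hJ : HasDerivAt (fun t:ℝ => t*pb - b*pa) pb a := by
    simpa using ((hasDerivAt_id a).mul_const pb).sub_const (b*pa)
  have hn : HasDerivAt (fun t:ℝ => (t*pb - b*pa)^2) (2*(a*pb-b*pa)*pb) a := by
    simpa using hJ.fun_pow 2
  have hd : HasDerivAt (fun t:ℝ => t^2 + b^2) (2*a) a := by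
    simpa using (hasDerivAt_pow 2 a).add_const (b^2)
  exact ((hn.div hd h).add_const k1).deriv

lemma dB1b (k1 a b pa pb : ℝ) (h : a^2+b^2 ≠ 0) :
    pdbR (B1 k1) a b pa pb
      = (2*(a*pb-b*pa)*(-pa)*(a^2+b^2) - (a*pb-b*pa)^2*(2*b))/(a^2+b^2)^2 := by
  unfold pdbR B1 Jang
  have hJ : HasDerivAt (fun t:ℝ => a*pb - t*pa) (-pa) b := by
    simpa using ((hasDerivAt_id b).mul_const pa).const_sub (a*pb)
  have hn : HasDerivAt (fun t:ℝ => (a*pb - t*pa)^2) (2*(a*pb-b*pa)*(-pa)) b := by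
    simpa using hJ.fun_pow 2
  have hd : HasDerivAt (fun t:ℝ => a^2 + t^2) (2*b) b := by
    simpa using (hasDerivAt_pow 2 b).const_add (a^2)
  exact ((hn.div hd h).add_const k1).deriv

lemma dB1pa (k1 a b pa pb : ℝ) :
    pdpaR (B1 k1) a b pa pb = (2*(a*pb-b*pa)*(-b))/(a^2+b^2) := by
  unfold pdpaR B1 Jang
  have hJ : HasDerivAt (fun t:ℝ => a*pb - b*t) (-b) pa := by
    simpa using ((hasDerivAt_id pa).const_mul b).const_sub (a*pb)
  have hn : HasDerivAt (fun t:ℝ => (a*pb - b*t)^2) (2*(a*pb-b*pa)*(-b)) pa := by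
    simpa using hJ.fun_pow 2
  exact ((hn.div_const _).add_const k1).deriv

lemma dB1pb (k1 a b pa pb : ℝ) :
    pdpbR (B1 k1) a b pa pb = (2*(a*pb-b*pa)*a)/(a^2+b^2) := by
  unfold pdpbR B1 Jang
  have hJ : HasDerivAt (fun t:ℝ => a*t - b*pa) a pb := by
    simpa using ((hasDerivAt_id pb).const_mul a).sub_const (b*pa)
  have hn : HasDerivAt (fun t:ℝ => (a*t - b*pa)^2) (2*(a*pb-b*pa)*a) pb := by
    simpa using hJ.fun_pow 2
  exact ((hn.div_const _).add_const k1).deriv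

lemma dB2a (k2 k3 a b pa pb : ℝ) (h : a^2+b^2 ≠ 0) :
    pdaR (B2 k2 k3) a b pa pb
      = ((pb*(a*pa+b*pb) + (a*pb-b*pa)*pa)*(a^2+b^2)
          - (a*pb-b*pa)*(a*pa+b*pb)*(2*a))/(a^2+b^2)^2 + k3 := by
  unfold pdaR B2 Jang
  have hJ : HasDerivAt (fun t:ℝ => t*pb - b*pa) pb a := by
    simpa using ((hasDerivAt_id a).mul_const pb).sub_const (b*pa)
  have hS : HasDerivAt (fun t:ℝ => t*pa + b*pb) pa a := by
    simpa using ((hasDerivAt_id a).mul_const pa).add_const (b*pb)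
  have hd : HasDerivAt (fun t:ℝ => t^2 + b^2) (2*a) a := by
    simpa using (hasDerivAt_pow 2 a).add_const (b^2)
  have hk : HasDerivAt (fun t:ℝ => k3*t) k3 a := by
    simpa using (hasDerivAt_id a).const_mul k3
  exact ((((hJ.mul hS).div hd h).add hk).sub_const (k2*b)).deriv

lemma dB2b (k2 k3 a b pa pb : ℝ) (h : a^2+b^2 ≠ 0) :
    pdbR (B2 k2 k3) a b pa pb
      = (((-pa)*(a*pa+b*pb) + (a*pb-b*pa)*pb)*(a^2+b^2)
          - (a*pb-b*pa)*(a*pa+b*pb)*(2*b))/(a^2+b^2)^2 - k2 := by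
  unfold pdbR B2 Jang
  have hJ : HasDerivAt (fun t:ℝ => a*pb - t*pa) (-pa) b := by
    simpa using ((hasDerivAt_id b).mul_const pa).const_sub (a*pb)
  have hS : HasDerivAt (fun t:ℝ => a*pa + t*pb) pb b := by
    simpa using ((hasDerivAt_id b).mul_const pb).const_add (a*pa)
  have hd : HasDerivAt (fun t:ℝ => a^2 + t^2) (2*b) b := by
    simpa using (hasDerivAt_pow 2 b).const_add (a^2)
  have hk : HasDerivAt (fun t:ℝ => k2*t) k2 b := by
    simpa using (hasDerivAt_id b).const_mul k2
  exact ((((hJ.mul hS).div hd h).add_const (k3*a)).sub hk).deriv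

lemma dB2pa (k2 k3 a b pa pb : ℝ) :
    pdpaR (B2 k2 k3) a b pa pb
      = ((-b)*(a*pa+b*pb) + (a*pb-b*pa)*a)/(a^2+b^2) := by
  unfold pdpaR B2 Jang
  have hJ : HasDerivAt (fun t:ℝ => a*pb - b*t) (-b) pa := by
    simpa using ((hasDerivAt_id pa).const_mul b).const_sub (a*pb)
  have hS : HasDerivAt (fun t:ℝ => a*t + b*pb) a pa := by
    simpa using ((hasDerivAt_id pa).const_mul a).add_const (b*pb)
  have := ((((hJ.mul hS).div_const (a^2+b^2)).add_const (k3*a)).sub_const (k2*b)).deriv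
  simpa [mul_comm] using this

lemma dB2pb (k2 k3 a b pa pb : ℝ) :
    pdpbR (B2 k2 k3) a b pa pb
      = (a*(a*pa+b*pb) + (a*pb-b*pa)*b)/(a^2+b^2) := by
  unfold pdpbR B2 Jang
  have hJ : HasDerivAt (fun t:ℝ => a*t - b*pa) a pb := by
    simpa using ((hasDerivAt_id pb).const_mul a).sub_const (b*pa)
  have hS : HasDerivAt (fun t:ℝ => a*pa + b*t) b pb := by
    simpa using ((hasDerivAt_id pb).const_mul b).const_add (a*pa)
  have := ((((hJ.mul hS).div_const (a^2+b^2)).add_const (k3*a)).sub_const (k2*b)).deriv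
  simpa [mul_comm] using this


lemma eb00 : ebasis 0 0 = (1:ℝ) := rfl
lemma eb01 : ebasis 0 1 = (0:ℝ) := rfl
lemma eb02 : ebasis 0 2 = (0:ℝ) := rfl
lemma eb03 : ebasis 0 3 = (0:ℝ) := rfl
lemma eb10 : ebasis 1 0 = (0:ℝ) := rfl
lemma eb11 : ebasis 1 1 = (1:ℝ) := rfl
lemma eb12 : ebasis 1 2 = (0:ℝ) := rfl
lemma eb13 : ebasis 1 3 = (0:ℝ) := rfl
lemma eb20 : ebasis 2 0 = (0:ℝ) := rfl
lemma eb21 : ebasis 2 1 = (0:ℝ) := rfl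
lemma eb22 : ebasis 2 2 = (1:ℝ) := rfl
lemma eb23 : ebasis 2 3 = (0:ℝ) := rfl
lemma eb30 : ebasis 3 0 = (0:ℝ) := rfl
lemma eb31 : ebasis 3 1 = (0:ℝ) := rfl
lemma eb32 : ebasis 3 2 = (0:ℝ) := rfl
lemma eb33 : ebasis 3 3 = (1:ℝ) := rfl

lemma comp1_01 (k1 k2 k3 a b pa pb : ℝ) (h : a^2+b^2 ≠ 0) :
    Om1 k1 k2 k3 a b pa pb (ebasis 0) (ebasis 1) = (-2*b^3*k2 + 2*a*b^2*k3 + 2*a^2*b*k2 - 2*a^3*k3)/(a^2+b^2)^2 := by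
  simp only [Om1, Om2, wedgeR, ddR, eb00, eb01, eb02, eb03, eb10, eb11, eb12, eb13, eb20, eb21, eb22, eb23, eb30, eb31, eb32, eb33,
    mul_one, mul_zero, add_zero, zero_add,
    dA1a a b pa pb h, dA1b a b pa pb h, dA2a a b pa pb h, dA2b a b pa pb h,
    dB1a k1 a b pa pb h, dB1b k1 a b pa pb h, dB1pa, dB1pb,
    dB2a k2 k3 a b pa pb h, dB2b k2 k3 a b pa pb h, dB2pa, dB2pb,
    dA1pa, dA1pb, dA2pa, dA2pb]
  field_simp
  try ring

lemma comp2_01 (k1 k2 k3 a b pa pb : ℝ) (h : a^2+b^2 ≠ 0) :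
    Om2 k1 k2 k3 a b pa pb (ebasis 0) (ebasis 1) = (4*a*b^2*k2 - 4*a^2*b*k3)/(a^2+b^2)^2 := by
  simp only [Om1, Om2, wedgeR, ddR, eb00, eb01, eb02, eb03, eb10, eb11, eb12, eb13, eb20, eb21, eb22, eb23, eb30, eb31, eb32, eb33,
    mul_one, mul_zero, add_zero, zero_add,
    dA1a a b pa pb h, dA1b a b pa pb h, dA2a a b pa pb h, dA2b a b pa pb h,
    dB1a k1 a b pa pb h, dB1b k1 a b pa pb h, dB1pa, dB1pb,
    dB2a k2 k3 a b pa pb h, dB2b k2 k3 a b pa pb h, dB2pa, dB2pb,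
    dA1pa, dA1pb, dA2pa, dA2pb]
  field_simp
  try ring

lemma comp1_02 (k1 k2 k3 a b pa pb : ℝ) (h : a^2+b^2 ≠ 0) :
    Om1 k1 k2 k3 a b pa pb (ebasis 0) (ebasis 2) = (-2*b^3*pb + 4*a*b^2*pa - 2*a^2*b*pb)/(a^2+b^2)^2 := by
  simp only [Om1, Om2, wedgeR, ddR, eb00, eb01, eb02, eb03, eb10, eb11, eb12, eb13, eb20, eb21, eb22, eb23, eb30, eb31, eb32, eb33,
    mul_one, mul_zero, add_zero, zero_add,
    dA1a a b pa pb h, dA1b a b pa pb h, dA2a a b pa pb h, dA2b a b pa pb h,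
    dB1a k1 a b pa pb h, dB1b k1 a b pa pb h, dB1pa, dB1pb,
    dB2a k2 k3 a b pa pb h, dB2b k2 k3 a b pa pb h, dB2pa, dB2pb,
    dA1pa, dA1pb, dA2pa, dA2pb]
  field_simp
  try ring

lemma comp2_02 (k1 k2 k3 a b pa pb : ℝ) (h : a^2+b^2 ≠ 0) :
    Om2 k1 k2 k3 a b pa pb (ebasis 0) (ebasis 2) = (4*b^3*pa)/(a^2+b^2)^2 := by
  simp only [Om1, Om2, wedgeR, ddR, eb00, eb01, eb02, eb03, eb10, eb11, eb12, eb13, eb20, eb21, eb22, eb23, eb30, eb31, eb32, eb33,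
    mul_one, mul_zero, add_zero, zero_add,
    dA1a a b pa pb h, dA1b a b pa pb h, dA2a a b pa pb h, dA2b a b pa pb h,
    dB1a k1 a b pa pb h, dB1b k1 a b pa pb h, dB1pa, dB1pb,
    dB2a k2 k3 a b pa pb h, dB2b k2 k3 a b pa pb h, dB2pa, dB2pb,
    dA1pa, dA1pb, dA2pa, dA2pb]
  field_simp
  try ring

lemma comp1_03 (k1 k2 k3 a b pa pb : ℝ) (h : a^2+b^2 ≠ 0) :
    Om1 k1 k2 k3 a b pa pb (ebasis 0) (ebasis 3) = (-2*b^3*pa + 4*a*b^2*pb - 2*a^2*b*pa)/(a^2+b^2)^2 := by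
  simp only [Om1, Om2, wedgeR, ddR, eb00, eb01, eb02, eb03, eb10, eb11, eb12, eb13, eb20, eb21, eb22, eb23, eb30, eb31, eb32, eb33,
    mul_one, mul_zero, add_zero, zero_add,
    dA1a a b pa pb h, dA1b a b pa pb h, dA2a a b pa pb h, dA2b a b pa pb h,
    dB1a k1 a b pa pb h, dB1b k1 a b pa pb h, dB1pa, dB1pb,
    dB2a k2 k3 a b pa pb h, dB2b k2 k3 a b pa pb h, dB2pa, dB2pb,
    dA1pa, dA1pb, dA2pa, dA2pb]
  field_simp
  try ring

lemma comp2_03 (k1 k2 k3 a b pa pb : ℝ) (h : a^2+b^2 ≠ 0) :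
    Om2 k1 k2 k3 a b pa pb (ebasis 0) (ebasis 3) = (-4*a^2*b*pb)/(a^2+b^2)^2 := by
  simp only [Om1, Om2, wedgeR, ddR, eb00, eb01, eb02, eb03, eb10, eb11, eb12, eb13, eb20, eb21, eb22, eb23, eb30, eb31, eb32, eb33,
    mul_one, mul_zero, add_zero, zero_add,
    dA1a a b pa pb h, dA1b a b pa pb h, dA2a a b pa pb h, dA2b a b pa pb h,
    dB1a k1 a b pa pb h, dB1b k1 a b pa pb h, dB1pa, dB1pb,
    dB2a k2 k3 a b pa pb h, dB2b k2 k3 a b pa pb h, dB2pa, dB2pb,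
    dA1pa, dA1pb, dA2pa, dA2pb]
  field_simp
  try ring

lemma comp1_12 (k1 k2 k3 a b pa pb : ℝ) (h : a^2+b^2 ≠ 0) :
    Om1 k1 k2 k3 a b pa pb (ebasis 1) (ebasis 2) = (2*a*b^2*pb - 4*a^2*b*pa + 2*a^3*pb)/(a^2+b^2)^2 := by
  simp only [Om1, Om2, wedgeR, ddR, eb00, eb01, eb02, eb03, eb10, eb11, eb12, eb13, eb20, eb21, eb22, eb23, eb30, eb31, eb32, eb33,
    mul_one, mul_zero, add_zero, zero_add,
    dA1a a b pa pb h, dA1b a b pa pb h, dA2a a b pa pb h, dA2b a b pa pb h,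
    dB1a k1 a b pa pb h, dB1b k1 a b pa pb h, dB1pa, dB1pb,
    dB2a k2 k3 a b pa pb h, dB2b k2 k3 a b pa pb h, dB2pa, dB2pb,
    dA1pa, dA1pb, dA2pa, dA2pb]
  field_simp
  try ring

lemma comp2_12 (k1 k2 k3 a b pa pb : ℝ) (h : a^2+b^2 ≠ 0) :
    Om2 k1 k2 k3 a b pa pb (ebasis 1) (ebasis 2) = (-4*a*b^2*pa)/(a^2+b^2)^2 := by
  simp only [Om1, Om2, wedgeR, ddR, eb00, eb01, eb02, eb03, eb10, eb11, eb12, eb13, eb20, eb21, eb22, eb23, eb30, eb31, eb32, eb33,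
    mul_one, mul_zero, add_zero, zero_add,
    dA1a a b pa pb h, dA1b a b pa pb h, dA2a a b pa pb h, dA2b a b pa pb h,
    dB1a k1 a b pa pb h, dB1b k1 a b pa pb h, dB1pa, dB1pb,
    dB2a k2 k3 a b pa pb h, dB2b k2 k3 a b pa pb h, dB2pa, dB2pb,
    dA1pa, dA1pb, dA2pa, dA2pb]
  field_simp
  try ring

lemma comp1_13 (k1 k2 k3 a b pa pb : ℝ) (h : a^2+b^2 ≠ 0) :
    Om1 k1 k2 k3 a b pa pb (ebasis 1) (ebasis 3) = (2*a*b^2*pa - 4*a^2*b*pb + 2*a^3*pa)/(a^2+b^2)^2 := by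
  simp only [Om1, Om2, wedgeR, ddR, eb00, eb01, eb02, eb03, eb10, eb11, eb12, eb13, eb20, eb21, eb22, eb23, eb30, eb31, eb32, eb33,
    mul_one, mul_zero, add_zero, zero_add,
    dA1a a b pa pb h, dA1b a b pa pb h, dA2a a b pa pb h, dA2b a b pa pb h,
    dB1a k1 a b pa pb h, dB1b k1 a b pa pb h, dB1pa, dB1pb,
    dB2a k2 k3 a b pa pb h, dB2b k2 k3 a b pa pb h, dB2pa, dB2pb,
    dA1pa, dA1pb, dA2pa, dA2pb]
  field_simp
  try ring

lemma comp2_13 (k1 k2 k3 a b pa pb : ℝ) (h : a^2+b^2 ≠ 0) :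
    Om2 k1 k2 k3 a b pa pb (ebasis 1) (ebasis 3) = (4*a^3*pb)/(a^2+b^2)^2 := by
  simp only [Om1, Om2, wedgeR, ddR, eb00, eb01, eb02, eb03, eb10, eb11, eb12, eb13, eb20, eb21, eb22, eb23, eb30, eb31, eb32, eb33,
    mul_one, mul_zero, add_zero, zero_add,
    dA1a a b pa pb h, dA1b a b pa pb h, dA2a a b pa pb h, dA2b a b pa pb h,
    dB1a k1 a b pa pb h, dB1b k1 a b pa pb h, dB1pa, dB1pb,
    dB2a k2 k3 a b pa pb h, dB2b k2 k3 a b pa pb h, dB2pa, dB2pb,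
    dA1pa, dA1pb, dA2pa, dA2pb]
  field_simp
  try ring

lemma comp1_23 (k1 k2 k3 a b pa pb : ℝ) (h : a^2+b^2 ≠ 0) :
    Om1 k1 k2 k3 a b pa pb (ebasis 2) (ebasis 3) = 0 := by
  simp only [Om1, Om2, wedgeR, ddR, eb00, eb01, eb02, eb03, eb10, eb11, eb12, eb13, eb20, eb21, eb22, eb23, eb30, eb31, eb32, eb33,
    mul_one, mul_zero, add_zero, zero_add,
    dA1a a b pa pb h, dA1b a b pa pb h, dA2a a b pa pb h, dA2b a b pa pb h,
    dB1a k1 a b pa pb h, dB1b k1 a b pa pb h, dB1pa, dB1pb,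
    dB2a k2 k3 a b pa pb h, dB2b k2 k3 a b pa pb h, dB2pa, dB2pb,
    dA1pa, dA1pb, dA2pa, dA2pb]
  field_simp
  try ring

lemma comp2_23 (k1 k2 k3 a b pa pb : ℝ) (h : a^2+b^2 ≠ 0) :
    Om2 k1 k2 k3 a b pa pb (ebasis 2) (ebasis 3) = 0 := by
  simp only [Om1, Om2, wedgeR, ddR, eb00, eb01, eb02, eb03, eb10, eb11, eb12, eb13, eb20, eb21, eb22, eb23, eb30, eb31, eb32, eb33,
    mul_one, mul_zero, add_zero, zero_add,
    dA1a a b pa pb h, dA1b a b pa pb h, dA2a a b pa pb h, dA2b a b pa pb h,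
    dB1a k1 a b pa pb h, dB1b k1 a b pa pb h, dB1pa, dB1pb,
    dB2a k2 k3 a b pa pb h, dB2b k2 k3 a b pa pb h, dB2pa, dB2pb,
    dA1pa, dA1pb, dA2pa, dA2pb]
  field_simp
  try ring

/-- the 4-forms `Ω₁ ∧ Ω₁`, `Ω₂ ∧ Ω₂` and `Ω₁ ∧ Ω₂` vanish identically on `U`,
expressed through the components `α_{jk} = Ω₁(e_j, e_k)` and `β_{jk} = Ω₂(e_j, e_k)`. -/
theorem stmt9 (k1 k2 k3 : ℝ) (a b pa pb : ℝ) (hU : a ^ 2 + b ^ 2 ≠ 0) :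
    (fun (al : Fin 4 → Fin 4 → ℝ) (be : Fin 4 → Fin 4 → ℝ) =>
        al 0 1 * al 2 3 - al 0 2 * al 1 3 + al 0 3 * al 1 2 = 0 ∧
        be 0 1 * be 2 3 - be 0 2 * be 1 3 + be 0 3 * be 1 2 = 0 ∧
        al 0 1 * be 2 3 + be 0 1 * al 2 3 - al 0 2 * be 1 3 - be 0 2 * al 1 3
          + al 0 3 * be 1 2 + be 0 3 * al 1 2 = 0)
      (fun j k => Om1 k1 k2 k3 a b pa pb (ebasis j) (ebasis k))
      (fun j k => Om2 k1 k2 k3 a b pa pb (ebasis j) (ebasis k)) := by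
  beta_reduce
  rw [comp1_01 k1 k2 k3 a b pa pb hU, comp1_02 k1 k2 k3 a b pa pb hU,
    comp1_03 k1 k2 k3 a b pa pb hU, comp1_12 k1 k2 k3 a b pa pb hU,
    comp1_13 k1 k2 k3 a b pa pb hU, comp1_23 k1 k2 k3 a b pa pb hU,
    comp2_01 k1 k2 k3 a b pa pb hU, comp2_02 k1 k2 k3 a b pa pb hU,
    comp2_03 k1 k2 k3 a b pa pb hU, comp2_12 k1 k2 k3 a b pa pb hU,
    comp2_13 k1 k2 k3 a b pa pb hU, comp2_23 k1 k2 k3 a b pa pb hU]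
  refine ⟨by field_simp; ring, by field_simp; ring, by field_simp; ring⟩
end
end

section
/- Let Y₃ and Y₄ be the Hamiltonian vector fields of J₃ = Re(A·B*) and J₄ = Im(A·B*), i.e. Y_k = (∂J_k/∂p_a, ∂J_k/∂p_b, −∂J_k/∂a, −∂J_k/∂b). Then at every point of U the dynamical vector field Γ is orthogonal to Y₄ with respect to Ω₁ and orthogonal to Y₃ with respect to Ω₂: Ω₁(Γ, Y₄) = 0 and Ω₂(Γ, Y₃) = 0. -/
noncomputable section

open Complex

private theorem hderiv_congr {f : ℝ → ℝ} {d d' x : ℝ} (h : HasDerivAt f d x) (hd : d = d') :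
    HasDerivAt f d' x := hd ▸ h

private theorem hd_A1_a (k1 k2 k3 a b pa pb : ℝ) (hU : a ^ 2 + b ^ 2 ≠ 0) :
    HasDerivAt (fun t => A1 t b pa pb) (((4:ℝ)*a*b^2) / (a^2+b^2)^2) a := by
  simp only [A1]
  exact hderiv_congr (((hasDerivAt_pow 2 a).sub_const (b^2)).div ((hasDerivAt_pow 2 a).add_const (b^2)) hU)
    (by
      try simp only [id_eq]
      try norm_num
      try field_simp
      try ring
      try tauto)

private theorem hd_A1_b (k1 k2 k3 a b pa pb : ℝ) (hU : a ^ 2 + b ^ 2 ≠ 0) :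
    HasDerivAt (fun t => A1 a t pa pb) (((-4:ℝ)*a^2*b) / (a^2+b^2)^2) b := by
  simp only [A1]
  exact hderiv_congr ((HasDerivAt.const_sub (a^2) (hasDerivAt_pow 2 b)).div ((hasDerivAt_pow 2 b).const_add (a^2)) hU)
    (by
      try simp only [id_eq]
      try norm_num
      try field_simp
      try ring
      try tauto)

private theorem hd_A1_pa (k1 k2 k3 a b pa pb : ℝ) (hU : a ^ 2 + b ^ 2 ≠ 0) :
    HasDerivAt (fun t => A1 a b t pb) (0:ℝ) pa := by
  simp only [A1]
  exact hasDerivAt_const pa ((a ^ 2 - b ^ 2) / (a ^ 2 + b ^ 2))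

private theorem hd_A1_pb (k1 k2 k3 a b pa pb : ℝ) (hU : a ^ 2 + b ^ 2 ≠ 0) :
    HasDerivAt (fun t => A1 a b pa t) (0:ℝ) pb := by
  simp only [A1]
  exact hasDerivAt_const pb ((a ^ 2 - b ^ 2) / (a ^ 2 + b ^ 2))

private theorem hd_A2_a (k1 k2 k3 a b pa pb : ℝ) (hU : a ^ 2 + b ^ 2 ≠ 0) :
    HasDerivAt (fun t => A2 t b pa pb) (((2:ℝ)*b^3 + (-2:ℝ)*a^2*b) / (a^2+b^2)^2) a := by
  simp only [A2]
  exact hderiv_congr ((((hasDerivAt_id a).const_mul 2).mul_const b).div ((hasDerivAt_pow 2 a).add_const (b^2)) hU)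
    (by
      try simp only [id_eq]
      try norm_num
      try field_simp
      try ring
      try tauto)

private theorem hd_A2_b (k1 k2 k3 a b pa pb : ℝ) (hU : a ^ 2 + b ^ 2 ≠ 0) :
    HasDerivAt (fun t => A2 a t pa pb) (((-2:ℝ)*a*b^2 + (2:ℝ)*a^3) / (a^2+b^2)^2) b := by
  simp only [A2]
  exact hderiv_congr (((hasDerivAt_id b).const_mul (2*a)).div ((hasDerivAt_pow 2 b).const_add (a^2)) hU)
    (by
      try simp only [id_eq]
      try norm_num
      try field_simp
      try ring
      try tauto)

private theorem hd_A2_pa (k1 k2 k3 a b pa pb : ℝ) (hU : a ^ 2 + b ^ 2 ≠ 0) :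
    HasDerivAt (fun t => A2 a b t pb) (0:ℝ) pa := by
  simp only [A2]
  exact hasDerivAt_const pa (2 * a * b / (a ^ 2 + b ^ 2))

private theorem hd_A2_pb (k1 k2 k3 a b pa pb : ℝ) (hU : a ^ 2 + b ^ 2 ≠ 0) :
    HasDerivAt (fun t => A2 a b pa t) (0:ℝ) pb := by
  simp only [A2]
  exact hasDerivAt_const pb (2 * a * b / (a ^ 2 + b ^ 2))

private theorem hd_B1_a (k1 k2 k3 a b pa pb : ℝ) (hU : a ^ 2 + b ^ 2 ≠ 0) :
    HasDerivAt (fun t => B1 k1 t b pa pb) (((-2:ℝ)*b^3*pa*pb + (2:ℝ)*a*b^2*pb^2 + (-2:ℝ)*a*b^2*pa^2 + (2:ℝ)*a^2*b*pa*pb) / (a^2+b^2)^2) a := by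
  simp only [B1, Jang]
  exact hderiv_congr ((((((hasDerivAt_id a).mul_const pb).sub_const (b*pa)).pow 2).div ((hasDerivAt_pow 2 a).add_const (b^2)) hU).add_const k1)
    (by
      try simp only [id_eq]
      try norm_num
      try field_simp
      try ring
      try tauto)

private theorem hd_B1_b (k1 k2 k3 a b pa pb : ℝ) (hU : a ^ 2 + b ^ 2 ≠ 0) :
    HasDerivAt (fun t => B1 k1 a t pa pb) (((2:ℝ)*a*b^2*pa*pb + (-2:ℝ)*a^2*b*pb^2 + (2:ℝ)*a^2*b*pa^2 + (-2:ℝ)*a^3*pa*pb) / (a^2+b^2)^2) b := by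
  simp only [B1, Jang]
  exact hderiv_congr ((((HasDerivAt.const_sub (a*pb) ((hasDerivAt_id b).mul_const pa)).pow 2).div ((hasDerivAt_pow 2 b).const_add (a^2)) hU).add_const k1)
    (by
      try simp only [id_eq]
      try norm_num
      try field_simp
      try ring
      try tauto)

private theorem hd_B1_pa (k1 k2 k3 a b pa pb : ℝ) (hU : a ^ 2 + b ^ 2 ≠ 0) :
    HasDerivAt (fun t => B1 k1 a b t pb) (((2:ℝ)*b^2*pa + (-2:ℝ)*a*b*pb) / (a^2+b^2)^1) pa := by
  simp only [B1, Jang]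
  exact hderiv_congr ((((HasDerivAt.const_sub (a*pb) ((hasDerivAt_id pa).const_mul b)).pow 2).div_const (a^2+b^2)).add_const k1)
    (by
      try simp only [id_eq]
      try norm_num
      try field_simp
      try ring
      try tauto)

private theorem hd_B1_pb (k1 k2 k3 a b pa pb : ℝ) (hU : a ^ 2 + b ^ 2 ≠ 0) :
    HasDerivAt (fun t => B1 k1 a b pa t) (((-2:ℝ)*a*b*pa + (2:ℝ)*a^2*pb) / (a^2+b^2)^1) pb := by
  simp only [B1, Jang]
  exact hderiv_congr ((((((hasDerivAt_id pb).const_mul a).sub_const (b*pa)).pow 2).div_const (a^2+b^2)).add_const k1)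
    (by
      try simp only [id_eq]
      try norm_num
      try field_simp
      try ring
      try tauto)

private theorem hd_B2_a (k1 k2 k3 a b pa pb : ℝ) (hU : a ^ 2 + b ^ 2 ≠ 0) :
    HasDerivAt (fun t => B2 k2 k3 t b pa pb) (((1:ℝ)*b^3*pb^2 + (-1:ℝ)*b^3*pa^2 + (1:ℝ)*b^4*k3 + (4:ℝ)*a*b^2*pa*pb + (-1:ℝ)*a^2*b*pb^2 + (1:ℝ)*a^2*b*pa^2 + (2:ℝ)*a^2*b^2*k3 + (1:ℝ)*a^4*k3) / (a^2+b^2)^2) a := by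
  simp only [B2, Jang]
  exact hderiv_congr (((((((hasDerivAt_id a).mul_const pb).sub_const (b*pa)).mul (((hasDerivAt_id a).mul_const pa).add_const (b*pb))).div ((hasDerivAt_pow 2 a).add_const (b^2)) hU).add ((hasDerivAt_id a).const_mul k3)).sub_const (k2*b))
    (by
      try simp only [id_eq]
      try norm_num
      try field_simp
      try ring
      try tauto)

private theorem hd_B2_b (k1 k2 k3 a b pa pb : ℝ) (hU : a ^ 2 + b ^ 2 ≠ 0) :
    HasDerivAt (fun t => B2 k2 k3 a t pa pb) (((-1:ℝ)*b^4*k2 + (-1:ℝ)*a*b^2*pb^2 + (1:ℝ)*a*b^2*pa^2 + (-4:ℝ)*a^2*b*pa*pb + (-2:ℝ)*a^2*b^2*k2 + (1:ℝ)*a^3*pb^2 + (-1:ℝ)*a^3*pa^2 + (-1:ℝ)*a^4*k2) / (a^2+b^2)^2) b := by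
  simp only [B2, Jang]
  exact hderiv_congr (((((HasDerivAt.const_sub (a*pb) ((hasDerivAt_id b).mul_const pa)).mul (((hasDerivAt_id b).mul_const pb).const_add (a*pa))).div ((hasDerivAt_pow 2 b).const_add (a^2)) hU).add_const (k3*a)).sub ((hasDerivAt_id b).const_mul k2))
    (by
      try simp only [id_eq]
      try norm_num
      try field_simp
      try ring
      try tauto)

private theorem hd_B2_pa (k1 k2 k3 a b pa pb : ℝ) (hU : a ^ 2 + b ^ 2 ≠ 0) :
    HasDerivAt (fun t => B2 k2 k3 a b t pb) (((-1:ℝ)*b^2*pb + (-2:ℝ)*a*b*pa + (1:ℝ)*a^2*pb) / (a^2+b^2)^1) pa := by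
  simp only [B2, Jang]
  exact hderiv_congr (((((HasDerivAt.const_sub (a*pb) ((hasDerivAt_id pa).const_mul b)).mul (((hasDerivAt_id pa).const_mul a).add_const (b*pb))).div_const (a^2+b^2)).add_const (k3*a)).sub_const (k2*b))
    (by
      try simp only [id_eq]
      try norm_num
      try field_simp
      try ring
      try tauto)

private theorem hd_B2_pb (k1 k2 k3 a b pa pb : ℝ) (hU : a ^ 2 + b ^ 2 ≠ 0) :
    HasDerivAt (fun t => B2 k2 k3 a b pa t) (((-1:ℝ)*b^2*pa + (2:ℝ)*a*b*pb + (1:ℝ)*a^2*pa) / (a^2+b^2)^1) pb := by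
  simp only [B2, Jang]
  exact hderiv_congr (((((((hasDerivAt_id pb).const_mul a).sub_const (b*pa)).mul (((hasDerivAt_id pb).const_mul b).const_add (a*pa))).div_const (a^2+b^2)).add_const (k3*a)).sub_const (k2*b))
    (by
      try simp only [id_eq]
      try norm_num
      try field_simp
      try ring
      try tauto)

private theorem hd_H_a (k1 k2 k3 a b pa pb : ℝ) (hU : a ^ 2 + b ^ 2 ≠ 0) :
    HasDerivAt (fun t => HR k1 k2 k3 t b pa pb) (((1:ℝ)*b^2*k2 + (-2:ℝ)*a*k1 + (-1:ℝ)*a*pb^2 + (-1:ℝ)*a*pa^2 + (-2:ℝ)*a*b*k3 + (-1:ℝ)*a^2*k2) / (a^2+b^2)^2) a := by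
  simp only [HR]
  exact hderiv_congr (((hasDerivAt_const a (pa^2+pb^2)).div (((hasDerivAt_pow 2 a).add_const (b^2)).const_mul 2) (mul_ne_zero two_ne_zero hU)).add (((((hasDerivAt_id a).const_mul k2).const_add k1).add_const (k3*b)).div ((hasDerivAt_pow 2 a).add_const (b^2)) hU))
    (by
      try simp only [id_eq]
      try norm_num
      try field_simp
      try ring
      try tauto)

private theorem hd_H_b (k1 k2 k3 a b pa pb : ℝ) (hU : a ^ 2 + b ^ 2 ≠ 0) :
    HasDerivAt (fun t => HR k1 k2 k3 a t pa pb) (((-2:ℝ)*b*k1 + (-1:ℝ)*b*pb^2 + (-1:ℝ)*b*pa^2 + (-1:ℝ)*b^2*k3 + (-2:ℝ)*a*b*k2 + (1:ℝ)*a^2*k3) / (a^2+b^2)^2) b := by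
  simp only [HR]
  exact hderiv_congr (((hasDerivAt_const b (pa^2+pb^2)).div (((hasDerivAt_pow 2 b).const_add (a^2)).const_mul 2) (mul_ne_zero two_ne_zero hU)).add ((((hasDerivAt_id b).const_mul k3).const_add (k1 + k2*a)).div ((hasDerivAt_pow 2 b).const_add (a^2)) hU))
    (by
      try simp only [id_eq]
      try norm_num
      try field_simp
      try ring
      try tauto)

private theorem hd_H_pa (k1 k2 k3 a b pa pb : ℝ) (hU : a ^ 2 + b ^ 2 ≠ 0) :
    HasDerivAt (fun t => HR k1 k2 k3 a b t pb) (((1:ℝ)*pa) / (a^2+b^2)^1) pa := by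
  simp only [HR]
  exact hderiv_congr (((((hasDerivAt_pow 2 pa).add_const (pb^2)).div_const (2*(a^2+b^2))).add_const ((k1 + k2*a + k3*b)/(a^2+b^2))))
    (by
      try simp only [id_eq]
      try norm_num
      try field_simp
      try ring
      try tauto)

private theorem hd_H_pb (k1 k2 k3 a b pa pb : ℝ) (hU : a ^ 2 + b ^ 2 ≠ 0) :
    HasDerivAt (fun t => HR k1 k2 k3 a b pa t) (((1:ℝ)*pb) / (a^2+b^2)^1) pb := by
  simp only [HR]
  exact hderiv_congr (((((hasDerivAt_pow 2 pb).const_add (pa^2)).div_const (2*(a^2+b^2))).add_const ((k1 + k2*a + k3*b)/(a^2+b^2))))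
    (by
      try simp only [id_eq]
      try norm_num
      try field_simp
      try ring
      try tauto)

private theorem J3split (k1 k2 k3 x y z w : ℝ) :
    J3fun k1 k2 k3 x y z w = A1 x y z w * B1 k1 x y z w + A2 x y z w * B2 k2 k3 x y z w := by
  simp [J3fun, Afun, Bfun, Complex.mul_re, Complex.mul_im]
  try ring

private theorem hd_J3_a (k1 k2 k3 a b pa pb : ℝ) (hU : a ^ 2 + b ^ 2 ≠ 0) :
    HasDerivAt (fun t => J3fun k1 k2 k3 t b pa pb) (((-2:ℝ)*b^4*k2 + (4:ℝ)*a*b^2*k1 + (2:ℝ)*a*b^2*pb^2 + (2:ℝ)*a*b^2*pa^2 + (4:ℝ)*a*b^3*k3 + (2:ℝ)*a^2*b^2*k2) / (a^2+b^2)^2) a := by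
  have e : (fun t => J3fun k1 k2 k3 t b pa pb) = (fun t => A1 t b pa pb * B1 k1 t b pa pb + A2 t b pa pb * B2 k2 k3 t b pa pb) := funext fun t => J3split k1 k2 k3 t b pa pb
  rw [e]
  exact hderiv_congr (((hd_A1_a k1 k2 k3 a b pa pb hU).mul (hd_B1_a k1 k2 k3 a b pa pb hU)).add ((hd_A2_a k1 k2 k3 a b pa pb hU).mul (hd_B2_a k1 k2 k3 a b pa pb hU)))
    (by
      simp only [A1, A2, B1, B2, Jang]
      try norm_num
      try field_simp
      try ring
      try tauto)

private theorem hd_J3_b (k1 k2 k3 a b pa pb : ℝ) (hU : a ^ 2 + b ^ 2 ≠ 0) :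
    HasDerivAt (fun t => J3fun k1 k2 k3 a t pa pb) (((-4:ℝ)*a^2*b*k1 + (-2:ℝ)*a^2*b*pb^2 + (-2:ℝ)*a^2*b*pa^2 + (-2:ℝ)*a^2*b^2*k3 + (-4:ℝ)*a^3*b*k2 + (2:ℝ)*a^4*k3) / (a^2+b^2)^2) b := by
  have e : (fun t => J3fun k1 k2 k3 a t pa pb) = (fun t => A1 a t pa pb * B1 k1 a t pa pb + A2 a t pa pb * B2 k2 k3 a t pa pb) := funext fun t => J3split k1 k2 k3 a t pa pb
  rw [e]
  exact hderiv_congr (((hd_A1_b k1 k2 k3 a b pa pb hU).mul (hd_B1_b k1 k2 k3 a b pa pb hU)).add ((hd_A2_b k1 k2 k3 a b pa pb hU).mul (hd_B2_b k1 k2 k3 a b pa pb hU)))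
    (by
      simp only [A1, A2, B1, B2, Jang]
      try norm_num
      try field_simp
      try ring
      try tauto)

private theorem hd_J3_pa (k1 k2 k3 a b pa pb : ℝ) (hU : a ^ 2 + b ^ 2 ≠ 0) :
    HasDerivAt (fun t => J3fun k1 k2 k3 a b t pb) (((-2:ℝ)*b^2*pa) / (a^2+b^2)^1) pa := by
  have e : (fun t => J3fun k1 k2 k3 a b t pb) = (fun t => A1 a b t pb * B1 k1 a b t pb + A2 a b t pb * B2 k2 k3 a b t pb) := funext fun t => J3split k1 k2 k3 a b t pb
  rw [e]
  exact hderiv_congr (((hd_A1_pa k1 k2 k3 a b pa pb hU).mul (hd_B1_pa k1 k2 k3 a b pa pb hU)).add ((hd_A2_pa k1 k2 k3 a b pa pb hU).mul (hd_B2_pa k1 k2 k3 a b pa pb hU)))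
    (by
      simp only [A1, A2, B1, B2, Jang]
      try norm_num
      try field_simp
      try ring
      try tauto)

private theorem hd_J3_pb (k1 k2 k3 a b pa pb : ℝ) (hU : a ^ 2 + b ^ 2 ≠ 0) :
    HasDerivAt (fun t => J3fun k1 k2 k3 a b pa t) (((2:ℝ)*a^2*pb) / (a^2+b^2)^1) pb := by
  have e : (fun t => J3fun k1 k2 k3 a b pa t) = (fun t => A1 a b pa t * B1 k1 a b pa t + A2 a b pa t * B2 k2 k3 a b pa t) := funext fun t => J3split k1 k2 k3 a b pa t
  rw [e]
  exact hderiv_congr (((hd_A1_pb k1 k2 k3 a b pa pb hU).mul (hd_B1_pb k1 k2 k3 a b pa pb hU)).add ((hd_A2_pb k1 k2 k3 a b pa pb hU).mul (hd_B2_pb k1 k2 k3 a b pa pb hU)))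
    (by
      simp only [A1, A2, B1, B2, Jang]
      try norm_num
      try field_simp
      try ring
      try tauto)

private theorem J4split (k1 k2 k3 x y z w : ℝ) :
    J4fun k1 k2 k3 x y z w = A2 x y z w * B1 k1 x y z w - A1 x y z w * B2 k2 k3 x y z w := by
  simp [J4fun, Afun, Bfun, Complex.mul_re, Complex.mul_im]
  try ring

private theorem hd_J4_a (k1 k2 k3 a b pa pb : ℝ) (hU : a ^ 2 + b ^ 2 ≠ 0) :
    HasDerivAt (fun t => J4fun k1 k2 k3 t b pa pb) (((2:ℝ)*b^3*k1 + (1:ℝ)*b^3*pb^2 + (1:ℝ)*b^3*pa^2 + (1:ℝ)*b^4*k3 + (4:ℝ)*a*b^3*k2 + (-2:ℝ)*a^2*b*k1 + (-1:ℝ)*a^2*b*pb^2 + (-1:ℝ)*a^2*b*pa^2 + (-4:ℝ)*a^2*b^2*k3 + (-1:ℝ)*a^4*k3) / (a^2+b^2)^2) a := by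
  have e : (fun t => J4fun k1 k2 k3 t b pa pb) = (fun t => A2 t b pa pb * B1 k1 t b pa pb - A1 t b pa pb * B2 k2 k3 t b pa pb) := funext fun t => J4split k1 k2 k3 t b pa pb
  rw [e]
  exact hderiv_congr ((((hd_A2_a k1 k2 k3 a b pa pb hU).mul (hd_B1_a k1 k2 k3 a b pa pb hU)).sub ((hd_A1_a k1 k2 k3 a b pa pb hU).mul (hd_B2_a k1 k2 k3 a b pa pb hU))))
    (by
      simp only [A1, A2, B1, B2, Jang]
      try norm_num
      try field_simp
      try ring
      try tauto)

private theorem hd_J4_b (k1 k2 k3 a b pa pb : ℝ) (hU : a ^ 2 + b ^ 2 ≠ 0) :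
    HasDerivAt (fun t => J4fun k1 k2 k3 a t pa pb) (((-1:ℝ)*b^4*k2 + (-2:ℝ)*a*b^2*k1 + (-1:ℝ)*a*b^2*pb^2 + (-1:ℝ)*a*b^2*pa^2 + (-4:ℝ)*a^2*b^2*k2 + (2:ℝ)*a^3*k1 + (1:ℝ)*a^3*pb^2 + (1:ℝ)*a^3*pa^2 + (4:ℝ)*a^3*b*k3 + (1:ℝ)*a^4*k2) / (a^2+b^2)^2) b := by
  have e : (fun t => J4fun k1 k2 k3 a t pa pb) = (fun t => A2 a t pa pb * B1 k1 a t pa pb - A1 a t pa pb * B2 k2 k3 a t pa pb) := funext fun t => J4split k1 k2 k3 a t pa pb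
  rw [e]
  exact hderiv_congr ((((hd_A2_b k1 k2 k3 a b pa pb hU).mul (hd_B1_b k1 k2 k3 a b pa pb hU)).sub ((hd_A1_b k1 k2 k3 a b pa pb hU).mul (hd_B2_b k1 k2 k3 a b pa pb hU))))
    (by
      simp only [A1, A2, B1, B2, Jang]
      try norm_num
      try field_simp
      try ring
      try tauto)

private theorem hd_J4_pa (k1 k2 k3 a b pa pb : ℝ) (hU : a ^ 2 + b ^ 2 ≠ 0) :
    HasDerivAt (fun t => J4fun k1 k2 k3 a b t pb) (((-1:ℝ)*b^2*pb + (2:ℝ)*a*b*pa + (-1:ℝ)*a^2*pb) / (a^2+b^2)^1) pa := by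
  have e : (fun t => J4fun k1 k2 k3 a b t pb) = (fun t => A2 a b t pb * B1 k1 a b t pb - A1 a b t pb * B2 k2 k3 a b t pb) := funext fun t => J4split k1 k2 k3 a b t pb
  rw [e]
  exact hderiv_congr ((((hd_A2_pa k1 k2 k3 a b pa pb hU).mul (hd_B1_pa k1 k2 k3 a b pa pb hU)).sub ((hd_A1_pa k1 k2 k3 a b pa pb hU).mul (hd_B2_pa k1 k2 k3 a b pa pb hU))))
    (by
      simp only [A1, A2, B1, B2, Jang]
      try norm_num
      try field_simp
      try ring
      try tauto)

private theorem hd_J4_pb (k1 k2 k3 a b pa pb : ℝ) (hU : a ^ 2 + b ^ 2 ≠ 0) :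
    HasDerivAt (fun t => J4fun k1 k2 k3 a b pa t) (((-1:ℝ)*b^2*pa + (2:ℝ)*a*b*pb + (-1:ℝ)*a^2*pa) / (a^2+b^2)^1) pb := by
  have e : (fun t => J4fun k1 k2 k3 a b pa t) = (fun t => A2 a b pa t * B1 k1 a b pa t - A1 a b pa t * B2 k2 k3 a b pa t) := funext fun t => J4split k1 k2 k3 a b pa t
  rw [e]
  exact hderiv_congr ((((hd_A2_pb k1 k2 k3 a b pa pb hU).mul (hd_B1_pb k1 k2 k3 a b pa pb hU)).sub ((hd_A1_pb k1 k2 k3 a b pa pb hU).mul (hd_B2_pb k1 k2 k3 a b pa pb hU))))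
    (by
      simp only [A1, A2, B1, B2, Jang]
      try norm_num
      try field_simp
      try ring
      try tauto)

private theorem dd_A1_G (k1 k2 k3 a b pa pb : ℝ) (hU : a ^ 2 + b ^ 2 ≠ 0) :
    ddR (A1) a b pa pb (GammaVF k1 k2 k3 a b pa pb) = (((4:ℝ)*a*b^2*pa + (-4:ℝ)*a^2*b*pb) / (a^2+b^2)^3) := by
  simp only [ddR, GammaVF, hamVF, Matrix.cons_val_zero, Matrix.cons_val_one, Matrix.head_cons, Matrix.cons_val_two, Matrix.cons_val_three, Matrix.tail_cons, pdaR, pdbR, pdpaR, pdpbR]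
  rw [(hd_A1_a k1 k2 k3 a b pa pb hU).deriv, (hd_A1_b k1 k2 k3 a b pa pb hU).deriv, (hd_A1_pa k1 k2 k3 a b pa pb hU).deriv, (hd_A1_pb k1 k2 k3 a b pa pb hU).deriv, (hd_H_a k1 k2 k3 a b pa pb hU).deriv, (hd_H_b k1 k2 k3 a b pa pb hU).deriv, (hd_H_pa k1 k2 k3 a b pa pb hU).deriv, (hd_H_pb k1 k2 k3 a b pa pb hU).deriv]
  field_simp
  try ring
  try tauto

private theorem dd_A1_Y3 (k1 k2 k3 a b pa pb : ℝ) (hU : a ^ 2 + b ^ 2 ≠ 0) :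
    ddR (A1) a b pa pb (hamVF (J3fun k1 k2 k3) a b pa pb) = (((-8:ℝ)*a*b^4*pa + (-8:ℝ)*a^4*b*pb) / (a^2+b^2)^3) := by
  simp only [ddR, hamVF, Matrix.cons_val_zero, Matrix.cons_val_one, Matrix.head_cons, Matrix.cons_val_two, Matrix.cons_val_three, Matrix.tail_cons, pdaR, pdbR, pdpaR, pdpbR]
  rw [(hd_A1_a k1 k2 k3 a b pa pb hU).deriv, (hd_A1_b k1 k2 k3 a b pa pb hU).deriv, (hd_A1_pa k1 k2 k3 a b pa pb hU).deriv, (hd_A1_pb k1 k2 k3 a b pa pb hU).deriv, (hd_J3_a k1 k2 k3 a b pa pb hU).deriv, (hd_J3_b k1 k2 k3 a b pa pb hU).deriv, (hd_J3_pa k1 k2 k3 a b pa pb hU).deriv, (hd_J3_pb k1 k2 k3 a b pa pb hU).deriv]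
  field_simp
  try ring
  try tauto

private theorem dd_A1_Y4 (k1 k2 k3 a b pa pb : ℝ) (hU : a ^ 2 + b ^ 2 ≠ 0) :
    ddR (A1) a b pa pb (hamVF (J4fun k1 k2 k3) a b pa pb) = (((-4:ℝ)*a*b^4*pb + (12:ℝ)*a^2*b^3*pa + (-12:ℝ)*a^3*b^2*pb + (4:ℝ)*a^4*b*pa) / (a^2+b^2)^3) := by
  simp only [ddR, hamVF, Matrix.cons_val_zero, Matrix.cons_val_one, Matrix.head_cons, Matrix.cons_val_two, Matrix.cons_val_three, Matrix.tail_cons, pdaR, pdbR, pdpaR, pdpbR]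
  rw [(hd_A1_a k1 k2 k3 a b pa pb hU).deriv, (hd_A1_b k1 k2 k3 a b pa pb hU).deriv, (hd_A1_pa k1 k2 k3 a b pa pb hU).deriv, (hd_A1_pb k1 k2 k3 a b pa pb hU).deriv, (hd_J4_a k1 k2 k3 a b pa pb hU).deriv, (hd_J4_b k1 k2 k3 a b pa pb hU).deriv, (hd_J4_pa k1 k2 k3 a b pa pb hU).deriv, (hd_J4_pb k1 k2 k3 a b pa pb hU).deriv]
  field_simp
  try ring
  try tauto

private theorem dd_A2_G (k1 k2 k3 a b pa pb : ℝ) (hU : a ^ 2 + b ^ 2 ≠ 0) :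
    ddR (A2) a b pa pb (GammaVF k1 k2 k3 a b pa pb) = (((2:ℝ)*b^3*pa + (-2:ℝ)*a*b^2*pb + (-2:ℝ)*a^2*b*pa + (2:ℝ)*a^3*pb) / (a^2+b^2)^3) := by
  simp only [ddR, GammaVF, hamVF, Matrix.cons_val_zero, Matrix.cons_val_one, Matrix.head_cons, Matrix.cons_val_two, Matrix.cons_val_three, Matrix.tail_cons, pdaR, pdbR, pdpaR, pdpbR]
  rw [(hd_A2_a k1 k2 k3 a b pa pb hU).deriv, (hd_A2_b k1 k2 k3 a b pa pb hU).deriv, (hd_A2_pa k1 k2 k3 a b pa pb hU).deriv, (hd_A2_pb k1 k2 k3 a b pa pb hU).deriv, (hd_H_a k1 k2 k3 a b pa pb hU).deriv, (hd_H_b k1 k2 k3 a b pa pb hU).deriv, (hd_H_pa k1 k2 k3 a b pa pb hU).deriv, (hd_H_pb k1 k2 k3 a b pa pb hU).deriv]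
  field_simp
  try ring
  try tauto

private theorem dd_A2_Y3 (k1 k2 k3 a b pa pb : ℝ) (hU : a ^ 2 + b ^ 2 ≠ 0) :
    ddR (A2) a b pa pb (hamVF (J3fun k1 k2 k3) a b pa pb) = (((-4:ℝ)*b^5*pa + (4:ℝ)*a^2*b^3*pa + (-4:ℝ)*a^3*b^2*pb + (4:ℝ)*a^5*pb) / (a^2+b^2)^3) := by
  simp only [ddR, hamVF, Matrix.cons_val_zero, Matrix.cons_val_one, Matrix.head_cons, Matrix.cons_val_two, Matrix.cons_val_three, Matrix.tail_cons, pdaR, pdbR, pdpaR, pdpbR]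
  rw [(hd_A2_a k1 k2 k3 a b pa pb hU).deriv, (hd_A2_b k1 k2 k3 a b pa pb hU).deriv, (hd_A2_pa k1 k2 k3 a b pa pb hU).deriv, (hd_A2_pb k1 k2 k3 a b pa pb hU).deriv, (hd_J3_a k1 k2 k3 a b pa pb hU).deriv, (hd_J3_b k1 k2 k3 a b pa pb hU).deriv, (hd_J3_pa k1 k2 k3 a b pa pb hU).deriv, (hd_J3_pb k1 k2 k3 a b pa pb hU).deriv]
  field_simp
  try ring
  try tauto

private theorem dd_A2_Y4 (k1 k2 k3 a b pa pb : ℝ) (hU : a ^ 2 + b ^ 2 ≠ 0) :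
    ddR (A2) a b pa pb (hamVF (J4fun k1 k2 k3) a b pa pb) = (((-2:ℝ)*b^5*pb + (6:ℝ)*a*b^4*pa + (-4:ℝ)*a^2*b^3*pb + (-4:ℝ)*a^3*b^2*pa + (6:ℝ)*a^4*b*pb + (-2:ℝ)*a^5*pa) / (a^2+b^2)^3) := by
  simp only [ddR, hamVF, Matrix.cons_val_zero, Matrix.cons_val_one, Matrix.head_cons, Matrix.cons_val_two, Matrix.cons_val_three, Matrix.tail_cons, pdaR, pdbR, pdpaR, pdpbR]
  rw [(hd_A2_a k1 k2 k3 a b pa pb hU).deriv, (hd_A2_b k1 k2 k3 a b pa pb hU).deriv, (hd_A2_pa k1 k2 k3 a b pa pb hU).deriv, (hd_A2_pb k1 k2 k3 a b pa pb hU).deriv, (hd_J4_a k1 k2 k3 a b pa pb hU).deriv, (hd_J4_b k1 k2 k3 a b pa pb hU).deriv, (hd_J4_pa k1 k2 k3 a b pa pb hU).deriv, (hd_J4_pb k1 k2 k3 a b pa pb hU).deriv]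
  field_simp
  try ring
  try tauto

private theorem dd_B1_G (k1 k2 k3 a b pa pb : ℝ) (hU : a ^ 2 + b ^ 2 ≠ 0) :
    ddR (B1 k1) a b pa pb (GammaVF k1 k2 k3 a b pa pb) = (((-2:ℝ)*b^3*pa^2*pb + (-2:ℝ)*b^4*pa*k2 + (4:ℝ)*a*b^2*pa*pb^2 + (-2:ℝ)*a*b^2*pa^3 + (2:ℝ)*a*b^3*pb*k2 + (2:ℝ)*a*b^3*pa*k3 + (-2:ℝ)*a^2*b*pb^3 + (4:ℝ)*a^2*b*pa^2*pb + (-2:ℝ)*a^2*b^2*pb*k3 + (-2:ℝ)*a^2*b^2*pa*k2 + (-2:ℝ)*a^3*pa*pb^2 + (2:ℝ)*a^3*b*pb*k2 + (2:ℝ)*a^3*b*pa*k3 + (-2:ℝ)*a^4*pb*k3) / (a^2+b^2)^3) := by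
  simp only [ddR, GammaVF, hamVF, Matrix.cons_val_zero, Matrix.cons_val_one, Matrix.head_cons, Matrix.cons_val_two, Matrix.cons_val_three, Matrix.tail_cons, pdaR, pdbR, pdpaR, pdpbR]
  rw [(hd_B1_a k1 k2 k3 a b pa pb hU).deriv, (hd_B1_b k1 k2 k3 a b pa pb hU).deriv, (hd_B1_pa k1 k2 k3 a b pa pb hU).deriv, (hd_B1_pb k1 k2 k3 a b pa pb hU).deriv, (hd_H_a k1 k2 k3 a b pa pb hU).deriv, (hd_H_b k1 k2 k3 a b pa pb hU).deriv, (hd_H_pa k1 k2 k3 a b pa pb hU).deriv, (hd_H_pb k1 k2 k3 a b pa pb hU).deriv]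
  field_simp
  try ring
  try tauto

private theorem dd_B1_Y3 (k1 k2 k3 a b pa pb : ℝ) (hU : a ^ 2 + b ^ 2 ≠ 0) :
    ddR (B1 k1) a b pa pb (hamVF (J3fun k1 k2 k3) a b pa pb) = (((4:ℝ)*b^5*pa^2*pb + (4:ℝ)*b^6*pa*k2 + (-8:ℝ)*a*b^4*pa*k1 + (-8:ℝ)*a*b^4*pa*pb^2 + (-4:ℝ)*a*b^5*pb*k2 + (-8:ℝ)*a*b^5*pa*k3 + (8:ℝ)*a^2*b^3*pb*k1 + (4:ℝ)*a^2*b^3*pb^3 + (8:ℝ)*a^2*b^4*pb*k3 + (-4:ℝ)*a^2*b^4*pa*k2 + (-8:ℝ)*a^3*b^2*pa*k1 + (-4:ℝ)*a^3*b^2*pa^3 + (4:ℝ)*a^3*b^3*pb*k2 + (-4:ℝ)*a^3*b^3*pa*k3 + (8:ℝ)*a^4*b*pb*k1 + (8:ℝ)*a^4*b*pa^2*pb + (4:ℝ)*a^4*b^2*pb*k3 + (-8:ℝ)*a^4*b^2*pa*k2 + (-4:ℝ)*a^5*pa*pb^2 + (8:ℝ)*a^5*b*pb*k2 + (4:ℝ)*a^5*b*pa*k3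 + (-4:ℝ)*a^6*pb*k3) / (a^2+b^2)^3) := by
  simp only [ddR, hamVF, Matrix.cons_val_zero, Matrix.cons_val_one, Matrix.head_cons, Matrix.cons_val_two, Matrix.cons_val_three, Matrix.tail_cons, pdaR, pdbR, pdpaR, pdpbR]
  rw [(hd_B1_a k1 k2 k3 a b pa pb hU).deriv, (hd_B1_b k1 k2 k3 a b pa pb hU).deriv, (hd_B1_pa k1 k2 k3 a b pa pb hU).deriv, (hd_B1_pb k1 k2 k3 a b pa pb hU).deriv, (hd_J3_a k1 k2 k3 a b pa pb hU).deriv, (hd_J3_b k1 k2 k3 a b pa pb hU).deriv, (hd_J3_pa k1 k2 k3 a b pa pb hU).deriv, (hd_J3_pb k1 k2 k3 a b pa pb hU).deriv]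
  field_simp
  try ring
  try tauto

private theorem dd_B1_Y4 (k1 k2 k3 a b pa pb : ℝ) (hU : a ^ 2 + b ^ 2 ≠ 0) :
    ddR (B1 k1) a b pa pb (hamVF (J4fun k1 k2 k3) a b pa pb) = (((-4:ℝ)*b^5*pa*k1 + (-2:ℝ)*b^5*pa^3 + (-2:ℝ)*b^6*pa*k3 + (4:ℝ)*a*b^4*pb*k1 + (-2:ℝ)*a*b^4*pa^2*pb + (2:ℝ)*a*b^5*pb*k3 + (-10:ℝ)*a*b^5*pa*k2 + (10:ℝ)*a^2*b^3*pa*pb^2 + (-6:ℝ)*a^2*b^3*pa^3 + (10:ℝ)*a^2*b^4*pb*k2 + (8:ℝ)*a^2*b^4*pa*k3 + (-6:ℝ)*a^3*b^2*pb^3 + (10:ℝ)*a^3*b^2*pa^2*pb + (-8:ℝ)*a^3*b^3*pb*k3 + (-8:ℝ)*a^3*b^3*pa*k2 + (4:ℝ)*a^4*b*pa*k1 + (-2:ℝ)*a^4*b*pa*pb^2 + (8:ℝ)*a^4*b^2*pb*k2 + (10:ℝ)*a^4*b^2*pa*k3 + (-4:ℝ)*a^5*pb*k1 + (-2:ℝ)*a^5*pb^3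 + (-10:ℝ)*a^5*b*pb*k3 + (2:ℝ)*a^5*b*pa*k2 + (-2:ℝ)*a^6*pb*k2) / (a^2+b^2)^3) := by
  simp only [ddR, hamVF, Matrix.cons_val_zero, Matrix.cons_val_one, Matrix.head_cons, Matrix.cons_val_two, Matrix.cons_val_three, Matrix.tail_cons, pdaR, pdbR, pdpaR, pdpbR]
  rw [(hd_B1_a k1 k2 k3 a b pa pb hU).deriv, (hd_B1_b k1 k2 k3 a b pa pb hU).deriv, (hd_B1_pa k1 k2 k3 a b pa pb hU).deriv, (hd_B1_pb k1 k2 k3 a b pa pb hU).deriv, (hd_J4_a k1 k2 k3 a b pa pb hU).deriv, (hd_J4_b k1 k2 k3 a b pa pb hU).deriv, (hd_J4_pa k1 k2 k3 a b pa pb hU).deriv, (hd_J4_pb k1 k2 k3 a b pa pb hU).deriv]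
  field_simp
  try ring
  try tauto

private theorem dd_B2_G (k1 k2 k3 a b pa pb : ℝ) (hU : a ^ 2 + b ^ 2 ≠ 0) :
    ddR (B2 k2 k3) a b pa pb (GammaVF k1 k2 k3 a b pa pb) = (((-2:ℝ)*b^3*pa*k1 + (-2:ℝ)*b^3*pa^3 + (2:ℝ)*a*b^2*pb*k1 + (6:ℝ)*a*b^2*pa^2*pb + (-2:ℝ)*a^2*b*pa*k1 + (-6:ℝ)*a^2*b*pa*pb^2 + (2:ℝ)*a^3*pb*k1 + (2:ℝ)*a^3*pb^3) / (a^2+b^2)^3) := by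
  simp only [ddR, GammaVF, hamVF, Matrix.cons_val_zero, Matrix.cons_val_one, Matrix.head_cons, Matrix.cons_val_two, Matrix.cons_val_three, Matrix.tail_cons, pdaR, pdbR, pdpaR, pdpbR]
  rw [(hd_B2_a k1 k2 k3 a b pa pb hU).deriv, (hd_B2_b k1 k2 k3 a b pa pb hU).deriv, (hd_B2_pa k1 k2 k3 a b pa pb hU).deriv, (hd_B2_pb k1 k2 k3 a b pa pb hU).deriv, (hd_H_a k1 k2 k3 a b pa pb hU).deriv, (hd_H_b k1 k2 k3 a b pa pb hU).deriv, (hd_H_pa k1 k2 k3 a b pa pb hU).deriv, (hd_H_pb k1 k2 k3 a b pa pb hU).deriv]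
  field_simp
  try ring
  try tauto

private theorem dd_B2_Y3 (k1 k2 k3 a b pa pb : ℝ) (hU : a ^ 2 + b ^ 2 ≠ 0) :
    ddR (B2 k2 k3) a b pa pb (hamVF (J3fun k1 k2 k3) a b pa pb) = (((-2:ℝ)*b^5*pa*pb^2 + (2:ℝ)*b^5*pa^3 + (-2:ℝ)*b^6*pb*k2 + (-2:ℝ)*b^6*pa*k3 + (4:ℝ)*a*b^4*pb*k1 + (2:ℝ)*a*b^4*pb^3 + (-6:ℝ)*a*b^4*pa^2*pb + (4:ℝ)*a*b^5*pb*k3 + (-4:ℝ)*a*b^5*pa*k2 + (4:ℝ)*a^2*b^3*pa*k1 + (4:ℝ)*a^2*b^3*pa*pb^2 + (2:ℝ)*a^2*b^4*pb*k2 + (2:ℝ)*a^2*b^4*pa*k3 + (4:ℝ)*a^3*b^2*pb*k1 + (4:ℝ)*a^3*b^2*pa^2*pb + (4:ℝ)*a^4*b*pa*k1 + (-6:ℝ)*a^4*b*pa*pb^2 + (2:ℝ)*a^4*b*pa^3 + (2:ℝ)*a^4*b^2*pb*k2 + (2:ℝ)*a^4*b^2*pa*k3 + (2:ℝ)*a^5*pb^3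 + (-2:ℝ)*a^5*pa^2*pb + (-4:ℝ)*a^5*b*pb*k3 + (4:ℝ)*a^5*b*pa*k2 + (-2:ℝ)*a^6*pb*k2 + (-2:ℝ)*a^6*pa*k3) / (a^2+b^2)^3) := by
  simp only [ddR, hamVF, Matrix.cons_val_zero, Matrix.cons_val_one, Matrix.head_cons, Matrix.cons_val_two, Matrix.cons_val_three, Matrix.tail_cons, pdaR, pdbR, pdpaR, pdpbR]
  rw [(hd_B2_a k1 k2 k3 a b pa pb hU).deriv, (hd_B2_b k1 k2 k3 a b pa pb hU).deriv, (hd_B2_pa k1 k2 k3 a b pa pb hU).deriv, (hd_B2_pb k1 k2 k3 a b pa pb hU).deriv, (hd_J3_a k1 k2 k3 a b pa pb hU).deriv, (hd_J3_b k1 k2 k3 a b pa pb hU).deriv, (hd_J3_pa k1 k2 k3 a b pa pb hU).deriv, (hd_J3_pb k1 k2 k3 a b pa pb hU).deriv]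
  field_simp
  try ring
  try tauto

private theorem dd_B2_Y4 (k1 k2 k3 a b pa pb : ℝ) (hU : a ^ 2 + b ^ 2 ≠ 0) :
    ddR (B2 k2 k3) a b pa pb (hamVF (J4fun k1 k2 k3) a b pa pb) = (((2:ℝ)*b^5*pb*k1 + (2:ℝ)*b^5*pa^2*pb + (2:ℝ)*a*b^4*pa*k1 + (-2:ℝ)*a*b^4*pa^3 + (4:ℝ)*a*b^5*pb*k2 + (4:ℝ)*a*b^5*pa*k3 + (-2:ℝ)*a^2*b^3*pb^3 + (14:ℝ)*a^2*b^3*pa^2*pb + (-8:ℝ)*a^2*b^4*pb*k3 + (8:ℝ)*a^2*b^4*pa*k2 + (-14:ℝ)*a^3*b^2*pa*pb^2 + (2:ℝ)*a^3*b^2*pa^3 + (-2:ℝ)*a^4*b*pb*k1 + (2:ℝ)*a^4*b*pb^3 + (-8:ℝ)*a^4*b^2*pb*k3 + (8:ℝ)*a^4*b^2*pa*k2 + (-2:ℝ)*a^5*pa*k1 + (-2:ℝ)*a^5*pa*pb^2 + (-4:ℝ)*a^5*b*pb*k2 + (-4:ℝ)*a^5*b*pa*k3) / (a^2+b^2)^3)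 := by
  simp only [ddR, hamVF, Matrix.cons_val_zero, Matrix.cons_val_one, Matrix.head_cons, Matrix.cons_val_two, Matrix.cons_val_three, Matrix.tail_cons, pdaR, pdbR, pdpaR, pdpbR]
  rw [(hd_B2_a k1 k2 k3 a b pa pb hU).deriv, (hd_B2_b k1 k2 k3 a b pa pb hU).deriv, (hd_B2_pa k1 k2 k3 a b pa pb hU).deriv, (hd_B2_pb k1 k2 k3 a b pa pb hU).deriv, (hd_J4_a k1 k2 k3 a b pa pb hU).deriv, (hd_J4_b k1 k2 k3 a b pa pb hU).deriv, (hd_J4_pa k1 k2 k3 a b pa pb hU).deriv, (hd_J4_pb k1 k2 k3 a b pa pb hU).deriv]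
  field_simp
  try ring
  try tauto

theorem stmt10 (k1 k2 k3 : ℝ) (a b pa pb : ℝ) (hU : a ^ 2 + b ^ 2 ≠ 0) :
    Om1 k1 k2 k3 a b pa pb (GammaVF k1 k2 k3 a b pa pb)
        (hamVF (J4fun k1 k2 k3) a b pa pb) = 0 ∧
      Om2 k1 k2 k3 a b pa pb (GammaVF k1 k2 k3 a b pa pb)
        (hamVF (J3fun k1 k2 k3) a b pa pb) = 0 := by
  constructor
  · simp only [Om1, wedgeR]
    rw [dd_A1_G k1 k2 k3 a b pa pb hU, dd_A1_Y4 k1 k2 k3 a b pa pb hU,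
        dd_B1_G k1 k2 k3 a b pa pb hU, dd_B1_Y4 k1 k2 k3 a b pa pb hU,
        dd_A2_G k1 k2 k3 a b pa pb hU, dd_A2_Y4 k1 k2 k3 a b pa pb hU,
        dd_B2_G k1 k2 k3 a b pa pb hU, dd_B2_Y4 k1 k2 k3 a b pa pb hU]
    field_simp
    try ring
    try tauto
  · simp only [Om2, wedgeR]
    rw [dd_A1_G k1 k2 k3 a b pa pb hU, dd_A1_Y3 k1 k2 k3 a b pa pb hU,
        dd_B1_G k1 k2 k3 a b pa pb hU, dd_B1_Y3 k1 k2 k3 a b pa pb hU,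
        dd_A2_G k1 k2 k3 a b pa pb hU, dd_A2_Y3 k1 k2 k3 a b pa pb hU,
        dd_B2_G k1 k2 k3 a b pa pb hU, dd_B2_Y3 k1 k2 k3 a b pa pb hU]
    field_simp
    try ring
    try tauto
end
end
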